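/- arXiv:1103.1795 — 3 statements merged into one kernel-verified Lean document; each statement's English description precedes it below -/
import Mathlib

section
/- Let β̃_n be a preliminary estimator with ||β̃_n − β_{n0}|| = O_p(√(p_n/n)), and let R̂ = n^{-1} Σ_{i=1}^n A_i^{-1/2}(β̃_n)(Y_i − π_i(β̃_n))(Y_i − π_i(β̃_n))^T A_i^{-1/2}(β̃_n) be the unstructured moment estimator of the working correlation matrix. Under conditions (A1)–(A3), if p_n^2/n → 0 as n → ∞, then ||R̂^{-1} − R_0^{-1}||_F = O_p(√(p_n/n)), where R_0 is the true common correlation matrix. -/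
open MeasureTheory ProbabilityTheory Filter Matrix
open scoped BigOperators ENNReal NNReal Topology

noncomputable section

namespace GEE

/-- Euclidean norm of a vector in `Fin k → ℝ`. -/
def vnorm {k : ℕ} (v : Fin k → ℝ) : ℝ := Real.sqrt (∑ i, v i ^ 2)

/-- Frobenius norm of a real matrix. -/
def fnorm {a b : ℕ} (M : Matrix (Fin a) (Fin b) ℝ) : ℝ :=
  Real.sqrt (∑ i, ∑ j, M i j ^ 2)

/-- The logistic (inverse logit) function. -/
def logistic (t : ℝ) : ℝ := Real.exp t / (1 + Real.exp t)

/-- `Z_n = O_p(a_n)` : boundedness in probability of `Z_n / a_n`. -/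
def IsBigOP {Ω : ℕ → Type} [∀ n, MeasurableSpace (Ω n)]
    (P : ∀ n, Measure (Ω n)) (Z : ∀ n, Ω n → ℝ) (a : ℕ → ℝ) : Prop :=
  ∀ ε : ℝ, 0 < ε → ∃ C : ℝ, 0 < C ∧
    ∀ᶠ n in atTop, P n {ω | C * a n < |Z n ω|} ≤ ENNReal.ofReal ε

/-- `Z_n = o_p(a_n)` : `Z_n / a_n` converges to `0` in probability. -/
def IsLittleOP {Ω : ℕ → Type} [∀ n, MeasurableSpace (Ω n)]
    (P : ∀ n, Measure (Ω n)) (Z : ∀ n, Ω n → ℝ) (a : ℕ → ℝ) : Prop :=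
  ∀ ε : ℝ, 0 < ε →
    Tendsto (fun n => P n {ω | ε * a n < |Z n ω|}) atTop (𝓝 0)

/-- Convergence in distribution to the standard normal law, stated via CDFs. -/
def TendstoStdNormal {Ω : ℕ → Type} [∀ n, MeasurableSpace (Ω n)]
    (P : ∀ n, Measure (Ω n)) (Z : ∀ n, Ω n → ℝ) : Prop :=
  ∀ t : ℝ, Tendsto (fun n => (P n {ω | Z n ω ≤ t}).toReal) atTop
    (𝓝 ((gaussianReal 0 1 (Set.Iic t)).toReal))

/-- Convergence in distribution to the `l`-dimensional standard normal law `N_l(0, I_l)`. -/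
def TendstoStdNormalVec {Ω : ℕ → Type} [∀ n, MeasurableSpace (Ω n)] (l : ℕ)
    (P : ∀ n, Measure (Ω n)) (Z : ∀ n, Ω n → Fin l → ℝ) : Prop :=
  ∀ t : Fin l → ℝ, Tendsto
    (fun n => (P n {ω | ∀ j, Z n ω j ≤ t j}).toReal) atTop
    (𝓝 (((Measure.pi fun _ : Fin l => gaussianReal 0 1) {x | ∀ j, x j ≤ t j}).toReal))

/-- The chi-squared distribution with `l` degrees of freedom, realized as the law of the
sum of squares of `l` i.i.d. standard normals. -/
def chiSq (l : ℕ) : Measure ℝ :=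
  Measure.map (fun x : Fin l → ℝ => ∑ j, x j ^ 2)
    (Measure.pi fun _ : Fin l => gaussianReal 0 1)

/-- Convergence in distribution to the chi-squared law with `l` degrees of freedom. -/
def TendstoChiSq {Ω : ℕ → Type} [∀ n, MeasurableSpace (Ω n)] (l : ℕ)
    (P : ∀ n, Measure (Ω n)) (Z : ∀ n, Ω n → ℝ) : Prop :=
  ∀ t : ℝ, Tendsto (fun n => (P n {ω | Z n ω ≤ t}).toReal) atTop
    (𝓝 ((chiSq l (Set.Iic t)).toReal))

/-- Marginal mean vector `π_i(β)` of cluster `i` under the marginal logistic model. -/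
def piv {a b : ℕ} (Xi : Matrix (Fin a) (Fin b) ℝ) (β : Fin b → ℝ) : Fin a → ℝ :=
  fun j => logistic (Xi.mulVec β j)

/-- The diagonal matrix `A_i(β)^{1/2}`. -/
def Ahalf {a b : ℕ} (Xi : Matrix (Fin a) (Fin b) ℝ) (β : Fin b → ℝ) :
    Matrix (Fin a) (Fin a) ℝ :=
  Matrix.diagonal fun j => Real.sqrt (piv Xi β j * (1 - piv Xi β j))

/-- The diagonal matrix `A_i(β)^{-1/2}`. -/
def Ainvhalf {a b : ℕ} (Xi : Matrix (Fin a) (Fin b) ℝ) (β : Fin b → ℝ) :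
    Matrix (Fin a) (Fin a) ℝ :=
  Matrix.diagonal fun j => (Real.sqrt (piv Xi β j * (1 - piv Xi β j)))⁻¹

/-- Standardized residual `ε_i(β) = A_i(β)^{-1/2} (Y_i - π_i(β))`. -/
def eps {a b : ℕ} (Xi : Matrix (Fin a) (Fin b) ℝ) (β : Fin b → ℝ) (Yi : Fin a → ℝ) :
    Fin a → ℝ :=
  (Ainvhalf Xi β).mulVec (Yi - piv Xi β)

/-- Single-cluster contribution `X_iᵀ A_i^{1/2}(β) W A_i^{-1/2}(β) (Y_i - π_i(β))` to a GEE
estimating function with working inverse-correlation matrix `W`. -/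
def Scluster {a b : ℕ} (Xi : Matrix (Fin a) (Fin b) ℝ) (W : Matrix (Fin a) (Fin a) ℝ)
    (β : Fin b → ℝ) (Yi : Fin a → ℝ) : Fin b → ℝ :=
  (Xiᵀ * Ahalf Xi β * W * Ainvhalf Xi β).mulVec (Yi - piv Xi β)

/-- Single-cluster contribution `X_iᵀ A_i^{1/2}(β) W A_i^{1/2}(β) X_i` to `H̄_n(β)`. -/
def Hcluster {a b : ℕ} (Xi : Matrix (Fin a) (Fin b) ℝ) (W : Matrix (Fin a) (Fin a) ℝ)
    (β : Fin b → ℝ) : Matrix (Fin b) (Fin b) ℝ :=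
  Xiᵀ * Ahalf Xi β * W * Ahalf Xi β * Xi

/-- Single-cluster contribution `X_iᵀ A_i^{1/2}(β) W R W A_i^{1/2}(β) X_i` to `M̄_n(β)`. -/
def Mcluster {a b : ℕ} (Xi : Matrix (Fin a) (Fin b) ℝ) (W R : Matrix (Fin a) (Fin a) ℝ)
    (β : Fin b → ℝ) : Matrix (Fin b) (Fin b) ℝ :=
  Xiᵀ * Ahalf Xi β * W * R * W * Ahalf Xi β * Xi

/-- Single-cluster contribution `X_iᵀ A_i^{1/2}(β) W ε_i(β) ε_i(β)ᵀ W A_i^{1/2}(β) X_i` to the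
middle of the sandwich estimator. -/
def Mhatcluster {a b : ℕ} (Xi : Matrix (Fin a) (Fin b) ℝ) (W : Matrix (Fin a) (Fin a) ℝ)
    (β : Fin b → ℝ) (Yi : Fin a → ℝ) : Matrix (Fin b) (Fin b) ℝ :=
  Xiᵀ * Ahalf Xi β * W * vecMulVec (eps Xi β Yi) (eps Xi β Yi) * W * Ahalf Xi β * Xi

/-- The Jacobian matrix (`∂f/∂βᵀ`) of a map `f : (Fin b → ℝ) → (Fin b → ℝ)` at `β`. -/
def jacobian {b : ℕ} (f : (Fin b → ℝ) → (Fin b → ℝ)) (β : Fin b → ℝ) :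
    Matrix (Fin b) (Fin b) ℝ :=
  Matrix.of fun k l => fderiv ℝ (fun x => f x k) β (Pi.single l 1)

/-- Smallest Rayleigh quotient value over unit vectors; equals `λ_min(M)` for symmetric `M`. -/
def lmin {b : ℕ} (M : Matrix (Fin b) (Fin b) ℝ) : ℝ :=
  sInf {r | ∃ v : Fin b → ℝ, vnorm v = 1 ∧ r = v ⬝ᵥ M.mulVec v}

/-- Largest Rayleigh quotient value over unit vectors; equals `λ_max(M)` for symmetric `M`. -/
def lmax {b : ℕ} (M : Matrix (Fin b) (Fin b) ℝ) : ℝ :=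
  sSup {r | ∃ v : Fin b → ℝ, vnorm v = 1 ∧ r = v ⬝ᵥ M.mulVec v}

/-! General GEE versions (arbitrary smooth marginal mean function `μ`). -/

/-- Marginal mean vector `μ_i(β)` in the general GEE model with mean function `mu`. -/
def gpiv {a b : ℕ} (mu : ℝ → ℝ) (Xi : Matrix (Fin a) (Fin b) ℝ) (β : Fin b → ℝ) :
    Fin a → ℝ :=
  fun j => mu (Xi.mulVec β j)

/-- `A_i(β)^{1/2}` in the general GEE model: diagonal with entries `√(μ̇(X_ijᵀ β))`. -/
def gAhalf {a b : ℕ} (mu : ℝ → ℝ) (Xi : Matrix (Fin a) (Fin b) ℝ) (β : Fin b → ℝ) :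
    Matrix (Fin a) (Fin a) ℝ :=
  Matrix.diagonal fun j => Real.sqrt (deriv mu (Xi.mulVec β j))

/-- `A_i(β)^{-1/2}` in the general GEE model. -/
def gAinvhalf {a b : ℕ} (mu : ℝ → ℝ) (Xi : Matrix (Fin a) (Fin b) ℝ) (β : Fin b → ℝ) :
    Matrix (Fin a) (Fin a) ℝ :=
  Matrix.diagonal fun j => (Real.sqrt (deriv mu (Xi.mulVec β j)))⁻¹

/-- Standardized residual in the general GEE model. -/
def geps {a b : ℕ} (mu : ℝ → ℝ) (Xi : Matrix (Fin a) (Fin b) ℝ) (β : Fin b → ℝ)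
    (Yi : Fin a → ℝ) : Fin a → ℝ :=
  (gAinvhalf mu Xi β).mulVec (Yi - gpiv mu Xi β)

/-- Single-cluster contribution to the general GEE estimating function. -/
def gScluster {a b : ℕ} (mu : ℝ → ℝ) (Xi : Matrix (Fin a) (Fin b) ℝ)
    (W : Matrix (Fin a) (Fin a) ℝ) (β : Fin b → ℝ) (Yi : Fin a → ℝ) : Fin b → ℝ :=
  (Xiᵀ * gAhalf mu Xi β * W * gAinvhalf mu Xi β).mulVec (Yi - gpiv mu Xi β)

/-- Single-cluster contribution to `H̄_n(β)` in the general GEE model. -/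
def gHcluster {a b : ℕ} (mu : ℝ → ℝ) (Xi : Matrix (Fin a) (Fin b) ℝ)
    (W : Matrix (Fin a) (Fin a) ℝ) (β : Fin b → ℝ) : Matrix (Fin b) (Fin b) ℝ :=
  Xiᵀ * gAhalf mu Xi β * W * gAhalf mu Xi β * Xi

/-- Single-cluster contribution to `M̄_n(β)` in the general GEE model. -/
def gMcluster {a b : ℕ} (mu : ℝ → ℝ) (Xi : Matrix (Fin a) (Fin b) ℝ)
    (W R : Matrix (Fin a) (Fin a) ℝ) (β : Fin b → ℝ) : Matrix (Fin b) (Fin b) ℝ :=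
  Xiᵀ * gAhalf mu Xi β * W * R * W * gAhalf mu Xi β * Xi

end GEE

open GEE

namespace GEEAux
open GEE

attribute [local instance] Matrix.frobeniusSeminormedAddCommGroup
  Matrix.frobeniusNormedAddCommGroup Matrix.frobeniusNormedRing
  Matrix.frobeniusNormedSpace Matrix.frobeniusNormedAlgebra

lemma vnorm_nonneg {k : ℕ} (v : Fin k → ℝ) : 0 ≤ vnorm v := Real.sqrt_nonneg _

lemma vnorm_sq {k : ℕ} (v : Fin k → ℝ) : vnorm v ^ 2 = ∑ i, v i ^ 2 :=
  Real.sq_sqrt (Finset.sum_nonneg fun i _ => sq_nonneg _)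

lemma fnorm_eq_norm {a b : ℕ} (M : Matrix (Fin a) (Fin b) ℝ) : fnorm M = ‖M‖ := by
  rw [Matrix.frobenius_norm_def, fnorm]
  rw [Real.sqrt_eq_rpow]
  congr 1
  refine Finset.sum_congr rfl fun i _ => Finset.sum_congr rfl fun j _ => ?_
  rw [Real.rpow_two, Real.norm_eq_abs, sq_abs]

lemma logistic_pos (t : ℝ) : 0 < logistic t :=
  div_pos (Real.exp_pos t) (by positivity)

lemma logistic_lt_one (t : ℝ) : logistic t < 1 := by
  rw [logistic, div_lt_one (by positivity)]; linarith

lemma logistic_lipschitz (a b : ℝ) : |logistic a - logistic b| ≤ |a - b| := by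
  have hd : ∀ x : ℝ, HasDerivAt logistic (Real.exp x / (1 + Real.exp x) ^ 2) x := by
    intro x
    have h1 : HasDerivAt (fun t : ℝ => Real.exp t) (Real.exp x) x := Real.hasDerivAt_exp x
    have h2 : HasDerivAt (fun t : ℝ => 1 + Real.exp t) (Real.exp x) x := by
      exact ((hasDerivAt_const x (1:ℝ)).add h1).congr_deriv (zero_add _)
    have hne : (1 : ℝ) + Real.exp x ≠ 0 := by positivity
    have := h1.div h2 hne
    exact this.congr_deriv (by ring)
  have key : ∀ x : ℝ, ‖Real.exp x / (1 + Real.exp x) ^ 2‖ ≤ 1 := by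
    intro x
    rw [Real.norm_eq_abs, abs_of_nonneg (by positivity)]
    rw [div_le_one (by positivity)]
    nlinarith [Real.exp_pos x]
  have := Convex.norm_image_sub_le_of_norm_hasDerivWithin_le
    (f := logistic) (f' := fun x => Real.exp x / (1 + Real.exp x) ^ 2) (s := Set.univ)
    (fun x _ => (hd x).hasDerivWithinAt) (fun x _ => key x) convex_univ
    (Set.mem_univ b) (Set.mem_univ a)
  simpa [Real.norm_eq_abs] using this

lemma abs_dot_le {k : ℕ} (v w : Fin k → ℝ) : |∑ i, v i * w i| ≤ vnorm v * vnorm w := by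
  have h := Finset.sum_mul_sq_le_sq_mul_sq Finset.univ v w
  have h2 : |∑ i, v i * w i| = Real.sqrt ((∑ i, v i * w i) ^ 2) := (Real.sqrt_sq_eq_abs _).symm
  rw [h2, vnorm, vnorm, ← Real.sqrt_mul (Finset.sum_nonneg fun i _ => sq_nonneg _)]
  exact Real.sqrt_le_sqrt h

lemma avg_abs_le {n : ℕ} (hn : 0 < n) (f : Fin n → ℝ) :
    (n:ℝ)⁻¹ * ∑ i, |f i| ≤ Real.sqrt ((n:ℝ)⁻¹ * ∑ i, f i ^ 2) := by
  have hnn : (0:ℝ) < n := by exact_mod_cast hn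
  have h := Finset.sum_mul_sq_le_sq_mul_sq Finset.univ (fun _ : Fin n => (1:ℝ)) (fun i => |f i|)
  simp only [one_pow, one_mul, Finset.sum_const, Finset.card_univ, Fintype.card_fin,
    nsmul_eq_mul, sq_abs] at h
  have h0 : 0 ≤ (n:ℝ)⁻¹ * ∑ i, |f i| := by positivity
  rw [← Real.sqrt_sq h0]
  apply Real.sqrt_le_sqrt
  have : ((n:ℝ)⁻¹ * ∑ i, |f i|) ^ 2 = (n:ℝ)⁻¹ * ((n:ℝ)⁻¹ * (∑ i, |f i|) ^ 2) := by
    ring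
  rw [this]
  gcongr
  rw [inv_mul_le_iff₀ hnn]
  calc (∑ i, |f i|) ^ 2 ≤ (n:ℝ) * 1 * ∑ i, f i ^ 2 := h
    _ = (n:ℝ) * ∑ i, f i ^ 2 := by ring

lemma dot_XtX {a b : ℕ} (X : Matrix (Fin a) (Fin b) ℝ) (v : Fin b → ℝ) :
    v ⬝ᵥ (Xᵀ * X).mulVec v = ∑ j, (X.mulVec v j) ^ 2 := by
  rw [← Matrix.mulVec_mulVec, Matrix.dotProduct_mulVec, Matrix.vecMul_transpose]
  simp [dotProduct, sq]

lemma fnorm_le_of_entries {a : ℕ} (M : Matrix (Fin a) (Fin a) ℝ) (B : ℝ) (hB : 0 ≤ B)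
    (h : ∀ i j, |M i j| ≤ B) : fnorm M ≤ a * B := by
  rw [fnorm]
  have : ∑ i, ∑ j, M i j ^ 2 ≤ (a : ℝ) * ((a : ℝ) * B ^ 2) := by
    calc ∑ i, ∑ j, M i j ^ 2 ≤ ∑ _i : Fin a, ∑ _j : Fin a, B ^ 2 := by
          apply Finset.sum_le_sum; intro i _; apply Finset.sum_le_sum; intro j _
          have h1 : |M i j| ^ 2 ≤ B ^ 2 := by
            have := h i j
            nlinarith [abs_nonneg (M i j)]
          calc M i j ^ 2 = |M i j| ^ 2 := (sq_abs _).symm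
            _ ≤ B ^ 2 := h1
      _ = (a : ℝ) * ((a : ℝ) * B ^ 2) := by simp [Finset.sum_const, mul_assoc]
  calc Real.sqrt (∑ i, ∑ j, M i j ^ 2) ≤ Real.sqrt ((a:ℝ) * ((a:ℝ) * B ^2)) :=
        Real.sqrt_le_sqrt this
    _ = (a : ℝ) * B := by
        rw [show (a:ℝ) * ((a:ℝ) * B^2) = ((a:ℝ)*B)^2 by ring]
        exact Real.sqrt_sq (by positivity)


lemma eps_apply {a b : ℕ} (Xi : Matrix (Fin a) (Fin b) ℝ) (β : Fin b → ℝ) (Yi : Fin a → ℝ)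
    (j : Fin a) :
    eps Xi β Yi j = (Real.sqrt (piv Xi β j * (1 - piv Xi β j)))⁻¹ * (Yi j - piv Xi β j) := by
  simp [eps, Ainvhalf, Matrix.mulVec_diagonal]

lemma eps_entry_bound {c u y : ℝ} (hc : 0 < c) (hcu : c ≤ u * (1 - u)) (hy : |y - u| ≤ 1) :
    |(Real.sqrt (u * (1 - u)))⁻¹ * (y - u)| ≤ (Real.sqrt c)⁻¹ := by
  have hsc : 0 < Real.sqrt c := Real.sqrt_pos.2 hc
  have hs : Real.sqrt c ≤ Real.sqrt (u * (1 - u)) := Real.sqrt_le_sqrt hcu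
  have hsp : 0 < Real.sqrt (u * (1 - u)) := lt_of_lt_of_le hsc hs
  rw [abs_mul, abs_inv, abs_of_pos hsp]
  calc (Real.sqrt (u * (1-u)))⁻¹ * |y - u| ≤ (Real.sqrt c)⁻¹ * 1 := by
        apply mul_le_mul _ hy (abs_nonneg _) (by positivity)
        exact inv_anti₀ hsc hs
    _ = (Real.sqrt c)⁻¹ := mul_one _

lemma eps_entry_diff {c u u' y : ℝ} (hc : 0 < c) (hcu : c ≤ u * (1 - u))
    (hcu' : c ≤ u' * (1 - u')) (hu0 : 0 ≤ u) (hu1 : u ≤ 1) (hu0' : 0 ≤ u') (hu1' : u' ≤ 1)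
    (hy : |y - u'| ≤ 1) :
    |(Real.sqrt (u * (1 - u)))⁻¹ * (y - u) - (Real.sqrt (u' * (1 - u')))⁻¹ * (y - u')|
      ≤ ((Real.sqrt c)⁻¹ + ((Real.sqrt c)⁻¹) ^ 3) * |u - u'| := by
  set s := Real.sqrt (u * (1 - u)) with hs_def
  set s' := Real.sqrt (u' * (1 - u')) with hs'_def
  have hsc : 0 < Real.sqrt c := Real.sqrt_pos.2 hc
  have hs1 : Real.sqrt c ≤ s := Real.sqrt_le_sqrt hcu
  have hs1' : Real.sqrt c ≤ s' := Real.sqrt_le_sqrt hcu'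
  have hsp : 0 < s := lt_of_lt_of_le hsc hs1
  have hsp' : 0 < s' := lt_of_lt_of_le hsc hs1'
  have hsq : s ^ 2 = u * (1 - u) := Real.sq_sqrt (le_trans hc.le hcu)
  have hsq' : s' ^ 2 = u' * (1 - u') := Real.sq_sqrt (le_trans hc.le hcu')
  -- decomposition
  have hdec : s⁻¹ * (y - u) - s'⁻¹ * (y - u') = s⁻¹ * (u' - u) + (y - u') * (s⁻¹ - s'⁻¹) := by
    field_simp
    ring
  rw [hdec]
  have h1 : |s⁻¹ * (u' - u)| ≤ (Real.sqrt c)⁻¹ * |u - u'| := by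
    rw [abs_mul, abs_inv, abs_of_pos hsp, abs_sub_comm]
    apply mul_le_mul_of_nonneg_right _ (abs_nonneg _)
    exact inv_anti₀ hsc hs1
  have hdiffsq : |s' ^ 2 - s ^ 2| ≤ |u - u'| := by
    rw [hsq, hsq']
    have : u' * (1 - u') - u * (1 - u) = (u' - u) * (1 - u - u') := by ring
    rw [this, abs_mul, abs_sub_comm u' u]
    have h11 : |1 - u - u'| ≤ 1 := by
      rw [abs_le]; constructor <;> nlinarith
    nlinarith [abs_nonneg (u - u')]
  have hss' : |s - s'| ≤ |u - u'| / (2 * Real.sqrt c) := by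
    have hfac : s' ^ 2 - s ^ 2 = (s' - s) * (s' + s) := by ring
    have hsum : 2 * Real.sqrt c ≤ s' + s := by linarith
    have : |s' - s| * (2 * Real.sqrt c) ≤ |s' - s| * (s' + s) := by
      apply mul_le_mul_of_nonneg_left hsum (abs_nonneg _)
    have h2 : |s' - s| * (s' + s) = |s' ^ 2 - s ^ 2| := by
      rw [hfac, abs_mul, abs_of_pos (by linarith : (0:ℝ) < s' + s)]
    have hgoal : |s' - s| * (2 * Real.sqrt c) ≤ |u - u'| := by
      calc |s' - s| * (2 * Real.sqrt c) ≤ |s' - s| * (s' + s) := this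
        _ = |s' ^ 2 - s ^ 2| := h2
        _ ≤ |u - u'| := hdiffsq
    rw [abs_sub_comm, le_div_iff₀ (by positivity)]
    exact hgoal
  have hinvdiff : |s⁻¹ - s'⁻¹| ≤ ((Real.sqrt c)⁻¹) ^ 3 * |u - u'| := by
    have : s⁻¹ - s'⁻¹ = (s' - s) / (s * s') := by field_simp
    rw [this, abs_div, abs_of_pos (by positivity : (0:ℝ) < s * s')]
    have hss : Real.sqrt c * Real.sqrt c ≤ s * s' := by
      apply mul_le_mul hs1 hs1' hsc.le hsp.le
    calc |s' - s| / (s * s') ≤ (|u - u'| / (2 * Real.sqrt c)) / (Real.sqrt c * Real.sqrt c) := by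
          apply div_le_div₀ (by positivity) _ (by positivity) hss
          rw [abs_sub_comm]; exact hss'
      _ ≤ ((Real.sqrt c)⁻¹) ^ 3 * |u - u'| := by
          rw [div_div]
          rw [div_le_iff₀ (by positivity)]
          have h3 : ((Real.sqrt c)⁻¹) ^ 3 * |u - u'| * (2 * Real.sqrt c * (Real.sqrt c * Real.sqrt c))
              = 2 * |u - u'| := by
            have hcs : Real.sqrt c ^ 2 = c := Real.sq_sqrt hc.le
            field_simp
          rw [h3]
          nlinarith [abs_nonneg (u - u')]
  calc |s⁻¹ * (u' - u) + (y - u') * (s⁻¹ - s'⁻¹)|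
      ≤ |s⁻¹ * (u' - u)| + |(y - u') * (s⁻¹ - s'⁻¹)| := abs_add_le _ _
    _ ≤ (Real.sqrt c)⁻¹ * |u - u'| + 1 * (((Real.sqrt c)⁻¹) ^ 3 * |u - u'|) := by
        apply add_le_add h1
        rw [abs_mul]
        apply mul_le_mul hy hinvdiff (abs_nonneg _) zero_le_one
    _ = ((Real.sqrt c)⁻¹ + ((Real.sqrt c)⁻¹) ^ 3) * |u - u'| := by ring

lemma inv_perturb {a : ℕ} (R0 E : Matrix (Fin a) (Fin a) ℝ) (hR0 : IsUnit R0.det)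
    (h : ‖R0⁻¹ * E‖ ≤ 1 / 2) :
    ‖(R0 + E)⁻¹ - R0⁻¹‖ ≤ 2 * ‖(1 : Matrix (Fin a) (Fin a) ℝ)‖ * ‖R0⁻¹‖ ^ 2 * ‖E‖ := by
  haveI : CompleteSpace (Matrix (Fin a) (Fin a) ℝ) := FiniteDimensional.complete ℝ _
  set T := R0⁻¹ * E with hT_def
  have hTnorm : ‖T‖ ≤ 1 / 2 := h
  have hunit1 : IsUnit (1 + T) := by
    have : ‖-T‖ < 1 := by rw [norm_neg]; linarith
    simpa [sub_neg_eq_add] using isUnit_one_sub_of_norm_lt_one this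
  have key : R0 + E = R0 * (1 + T) := by
    rw [mul_add, mul_one, hT_def, ← Matrix.mul_assoc, Matrix.mul_nonsing_inv _ hR0, Matrix.one_mul]
  have hdet1 : IsUnit (1 + T).det := (Matrix.isUnit_iff_isUnit_det _).1 hunit1
  set u := (1 + T)⁻¹ with hu_def
  have hu : (1 + T) * u = 1 := Matrix.mul_nonsing_inv _ hdet1
  have hu2 : u = 1 - T * u := by
    have h0 : u + T * u = 1 := by
      calc u + T * u = (1 + T) * u := by noncomm_ring
        _ = 1 := hu
    exact eq_sub_of_add_eq h0
  have hnu : ‖u‖ ≤ 2 * ‖(1 : Matrix (Fin a) (Fin a) ℝ)‖ := by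
    have h1 : ‖u‖ ≤ ‖(1 : Matrix (Fin a) (Fin a) ℝ)‖ + ‖T * u‖ := by
      calc ‖u‖ = ‖1 - T * u‖ := by rw [← hu2]
        _ ≤ ‖(1 : Matrix (Fin a) (Fin a) ℝ)‖ + ‖T * u‖ := norm_sub_le _ _
    have h2 : ‖T * u‖ ≤ ‖T‖ * ‖u‖ := norm_mul_le _ _
    have h3 : ‖T‖ * ‖u‖ ≤ (1/2) * ‖u‖ := by
      apply mul_le_mul_of_nonneg_right hTnorm (norm_nonneg _)
    linarith
  have hinv : (R0 + E)⁻¹ = u * R0⁻¹ := by rw [key, Matrix.mul_inv_rev]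
  have hdiff : (R0 + E)⁻¹ - R0⁻¹ = -(T * u) * R0⁻¹ := by
    rw [hinv]
    have h4 : u - 1 = -(T * u) := by
      nth_rewrite 1 [hu2]
      abel
    calc u * R0⁻¹ - R0⁻¹ = (u - 1) * R0⁻¹ := by noncomm_ring
      _ = -(T * u) * R0⁻¹ := by rw [h4]
  rw [hdiff]
  calc ‖-(T * u) * R0⁻¹‖ ≤ ‖-(T * u)‖ * ‖R0⁻¹‖ := norm_mul_le _ _
    _ = ‖T * u‖ * ‖R0⁻¹‖ := by rw [norm_neg]
    _ ≤ (‖T‖ * ‖u‖) * ‖R0⁻¹‖ := by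
        apply mul_le_mul_of_nonneg_right (norm_mul_le _ _) (norm_nonneg _)
    _ ≤ ((‖R0⁻¹‖ * ‖E‖) * (2 * ‖(1 : Matrix (Fin a) (Fin a) ℝ)‖)) * ‖R0⁻¹‖ := by
        apply mul_le_mul_of_nonneg_right _ (norm_nonneg _)
        apply mul_le_mul (norm_mul_le _ _) hnu (norm_nonneg _) (by positivity)
    _ = 2 * ‖(1 : Matrix (Fin a) (Fin a) ℝ)‖ * ‖R0⁻¹‖ ^ 2 * ‖E‖ := by ring


/-- auxiliary constant -/
def c0v (b1 b2 : ℝ) : ℝ := b1 / 2 * ((1 - b2) / 2)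

/-- auxiliary constant: `Ce * (Ce + Ce^3)` with `Ce = (√c0)⁻¹`. -/
def CeL (b1 b2 : ℝ) : ℝ :=
  (Real.sqrt (c0v b1 b2))⁻¹ * ((Real.sqrt (c0v b1 b2))⁻¹ + ((Real.sqrt (c0v b1 b2))⁻¹) ^ 3)

lemma CeL_nonneg (b1 b2 : ℝ) : 0 ≤ CeL b1 b2 := by
  unfold CeL
  positivity

lemma dotProduct_sum_mulVec {ι : Type*} (s : Finset ι) {k : ℕ}
    (M : ι → Matrix (Fin k) (Fin k) ℝ) (v : Fin k → ℝ) :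
    v ⬝ᵥ (∑ i ∈ s, M i).mulVec v = ∑ i ∈ s, v ⬝ᵥ (M i).mulVec v := by
  classical
  induction s using Finset.induction_on with
  | empty => simp
  | insert _ _ h ih =>
      rw [Finset.sum_insert h, Finset.sum_insert h, Matrix.add_mulVec, dotProduct_add, ih]

set_option maxHeartbeats 2000000 in
lemma core {m n pn : ℕ} (hn : 0 < n) (hm : 0 < m)
    (X : Fin n → Matrix (Fin m) (Fin pn) ℝ) (Yv : Fin n → Fin m → ℝ)
    (β0 βt : Fin pn → ℝ) (R0 : Matrix (Fin m) (Fin m) ℝ)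
    (b1 b2 b4 K C1 : ℝ)
    (hb1 : 0 < b1) (hb2 : b2 < 1) (hb4 : 0 ≤ b4) (hK : 0 ≤ K) (hC1 : 0 ≤ C1)
    (hbin : ∀ i j, Yv i j = 0 ∨ Yv i j = 1)
    (hA2 : ∀ i j, b1 ≤ piv (X i) β0 j ∧ piv (X i) β0 j ≤ b2)
    (hA3u : ∀ v : Fin pn → ℝ,
      (n:ℝ)⁻¹ * (v ⬝ᵥ (∑ i, (X i)ᵀ * X i).mulVec v) ≤ b4 * ∑ k, v k ^ 2)
    (hΔ : vnorm (βt - β0) ≤ K * Real.sqrt (pn / n))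
    (hsmall : ∀ i j, |(X i).mulVec βt j - (X i).mulVec β0 j| ≤ min (b1 / 2) ((1 - b2) / 2))
    (hent : ∀ j j', |(n:ℝ)⁻¹ * (∑ i, eps (X i) β0 (Yv i) j * eps (X i) β0 (Yv i) j') - R0 j j'|
        ≤ C1 * Real.sqrt (pn / n)) :
    fnorm ((Matrix.of fun j j' : Fin m => (n:ℝ)⁻¹ *
          ∑ i, eps (X i) βt (Yv i) j * eps (X i) βt (Yv i) j') - R0)
      ≤ (m * (C1 + 2 * CeL b1 b2 * Real.sqrt b4 * K)) * Real.sqrt (pn / n) := by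
  have hnR : (0:ℝ) < n := by exact_mod_cast hn
  set a := Real.sqrt ((pn : ℝ) / n) with ha_def
  have ha : 0 ≤ a := Real.sqrt_nonneg _
  set c0 := c0v b1 b2 with hc0_def
  have hc0 : 0 < c0 := by unfold c0; unfold c0v; nlinarith
  set Ce := (Real.sqrt c0)⁻¹ with hCe_def
  have hCe : 0 < Ce := by positivity
  set L := Ce + Ce ^ 3 with hL_def
  have hL : 0 < L := by positivity
  -- basic per-cluster facts
  have hpiv0 : ∀ (i : Fin n) (j : Fin m), 0 < piv (X i) β0 j ∧ piv (X i) β0 j < 1 :=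
    fun i j => ⟨logistic_pos _, logistic_lt_one _⟩
  have hpivt : ∀ (i : Fin n) (j : Fin m), 0 < piv (X i) βt j ∧ piv (X i) βt j < 1 :=
    fun i j => ⟨logistic_pos _, logistic_lt_one _⟩
  have hπd : ∀ (i : Fin n) (j : Fin m),
      |piv (X i) βt j - piv (X i) β0 j| ≤ |(X i).mulVec βt j - (X i).mulVec β0 j| :=
    fun i j => logistic_lipschitz _ _
  have hπsmall : ∀ (i : Fin n) (j : Fin m),
      |piv (X i) βt j - piv (X i) β0 j| ≤ min (b1 / 2) ((1 - b2) / 2) :=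
    fun i j => le_trans (hπd i j) (hsmall i j)
  have hc0t : ∀ (i : Fin n) (j : Fin m), c0 ≤ piv (X i) βt j * (1 - piv (X i) βt j) := by
    intro i j
    have h1 := hπsmall i j
    have h2 := (hA2 i j).1
    have h3 := (hA2 i j).2
    have h4 : |piv (X i) βt j - piv (X i) β0 j| ≤ b1 / 2 := le_trans h1 (min_le_left _ _)
    have h5 : |piv (X i) βt j - piv (X i) β0 j| ≤ (1 - b2) / 2 := le_trans h1 (min_le_right _ _)
    rw [abs_le] at h4 h5
    unfold c0; unfold c0v
    nlinarith [h4.1, h4.2, h5.1, h5.2]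
  have hc00 : ∀ (i : Fin n) (j : Fin m), c0 ≤ piv (X i) β0 j * (1 - piv (X i) β0 j) := by
    intro i j
    have h2 := (hA2 i j).1
    have h3 := (hA2 i j).2
    unfold c0; unfold c0v
    nlinarith
  have hY0 : ∀ (i : Fin n) (j : Fin m), |Yv i j - piv (X i) β0 j| ≤ 1 := by
    intro i j
    have h1 := (hpiv0 i j).1
    have h2 := (hpiv0 i j).2
    rcases hbin i j with h | h <;> rw [h, abs_le] <;> constructor <;> nlinarith
  have hYt : ∀ (i : Fin n) (j : Fin m), |Yv i j - piv (X i) βt j| ≤ 1 := by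
    intro i j
    have h1 := (hpivt i j).1
    have h2 := (hpivt i j).2
    rcases hbin i j with h | h <;> rw [h, abs_le] <;> constructor <;> nlinarith
  -- eps bounds
  have hebt : ∀ (i : Fin n) (j : Fin m), |eps (X i) βt (Yv i) j| ≤ Ce := by
    intro i j
    rw [eps_apply]
    exact eps_entry_bound hc0 (hc0t i j) (hYt i j)
  have heb0 : ∀ (i : Fin n) (j : Fin m), |eps (X i) β0 (Yv i) j| ≤ Ce := by
    intro i j
    rw [eps_apply]
    exact eps_entry_bound hc0 (hc00 i j) (hY0 i j)
  have hediff : ∀ (i : Fin n) (j : Fin m),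
      |eps (X i) βt (Yv i) j - eps (X i) β0 (Yv i) j|
        ≤ L * |(X i).mulVec βt j - (X i).mulVec β0 j| := by
    intro i j
    rw [eps_apply, eps_apply]
    calc |(Real.sqrt (piv (X i) βt j * (1 - piv (X i) βt j)))⁻¹ * (Yv i j - piv (X i) βt j)
          - (Real.sqrt (piv (X i) β0 j * (1 - piv (X i) β0 j)))⁻¹ * (Yv i j - piv (X i) β0 j)|
        ≤ L * |piv (X i) βt j - piv (X i) β0 j| := by
          rw [hL_def, hCe_def]
          exact eps_entry_diff hc0 (hc0t i j) (hc00 i j)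
            (hpivt i j).1.le (hpivt i j).2.le (hpiv0 i j).1.le (hpiv0 i j).2.le (hY0 i j)
      _ ≤ L * |(X i).mulVec βt j - (X i).mulVec β0 j| := by
          apply mul_le_mul_of_nonneg_left (hπd i j) hL.le
  -- product difference
  have hterm : ∀ (i : Fin n) (j j' : Fin m),
      |eps (X i) βt (Yv i) j * eps (X i) βt (Yv i) j'
        - eps (X i) β0 (Yv i) j * eps (X i) β0 (Yv i) j'|
      ≤ Ce * L * (|(X i).mulVec βt j - (X i).mulVec β0 j|
          + |(X i).mulVec βt j' - (X i).mulVec β0 j'|) := by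
    intro i j j'
    set et := eps (X i) βt (Yv i) j
    set et' := eps (X i) βt (Yv i) j'
    set e0 := eps (X i) β0 (Yv i) j
    set e0' := eps (X i) β0 (Yv i) j'
    have hid : et * et' - e0 * e0' = (et - e0) * et' + e0 * (et' - e0') := by ring
    rw [hid]
    calc |(et - e0) * et' + e0 * (et' - e0')| ≤ |(et - e0) * et'| + |e0 * (et' - e0')| :=
          abs_add_le _ _
      _ = |et - e0| * |et'| + |e0| * |et' - e0'| := by rw [abs_mul, abs_mul]
      _ ≤ (L * |(X i).mulVec βt j - (X i).mulVec β0 j|) * Ce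
          + Ce * (L * |(X i).mulVec βt j' - (X i).mulVec β0 j'|) := by
          apply add_le_add
          · exact mul_le_mul (hediff i j) (hebt i j') (abs_nonneg _) (by positivity)
          · exact mul_le_mul (heb0 i j) (hediff i j') (abs_nonneg _) hCe.le
      _ = Ce * L * (|(X i).mulVec βt j - (X i).mulVec β0 j|
          + |(X i).mulVec βt j' - (X i).mulVec β0 j'|) := by ring
  -- average of |X_i Δ| over clusters
  have havg : ∀ j : Fin m,
      (n:ℝ)⁻¹ * ∑ i, |(X i).mulVec βt j - (X i).mulVec β0 j| ≤ Real.sqrt b4 * (K * a) := by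
    intro j
    have hrw : ∀ i : Fin n, (X i).mulVec βt j - (X i).mulVec β0 j = (X i).mulVec (βt - β0) j := by
      intro i; rw [Matrix.mulVec_sub]; rfl
    calc (n:ℝ)⁻¹ * ∑ i, |(X i).mulVec βt j - (X i).mulVec β0 j|
        = (n:ℝ)⁻¹ * ∑ i, |(X i).mulVec (βt - β0) j| := by
          congr 1; exact Finset.sum_congr rfl fun i _ => by rw [hrw]
      _ ≤ Real.sqrt ((n:ℝ)⁻¹ * ∑ i, ((X i).mulVec (βt - β0) j) ^ 2) :=
          avg_abs_le hn _
      _ ≤ Real.sqrt (b4 * ∑ k, (βt - β0) k ^ 2) := by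
          apply Real.sqrt_le_sqrt
          calc (n:ℝ)⁻¹ * ∑ i, ((X i).mulVec (βt - β0) j) ^ 2
              ≤ (n:ℝ)⁻¹ * ∑ i, ∑ j'', ((X i).mulVec (βt - β0) j'') ^ 2 := by
                gcongr with i hi
                exact Finset.single_le_sum (fun j'' _ => sq_nonneg ((X i).mulVec (βt - β0) j''))
                  (Finset.mem_univ j)
            _ = (n:ℝ)⁻¹ * ((βt - β0) ⬝ᵥ (∑ i, (X i)ᵀ * X i).mulVec (βt - β0)) := by
                rw [dotProduct_sum_mulVec]
                congr 1
                exact Finset.sum_congr rfl fun i _ => (dot_XtX (X i) (βt - β0)).symm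
            _ ≤ b4 * ∑ k, (βt - β0) k ^ 2 := hA3u _
      _ = Real.sqrt b4 * Real.sqrt (∑ k, (βt - β0) k ^ 2) := Real.sqrt_mul hb4 _
      _ = Real.sqrt b4 * vnorm (βt - β0) := rfl
      _ ≤ Real.sqrt b4 * (K * a) := by
          apply mul_le_mul_of_nonneg_left hΔ (Real.sqrt_nonneg _)
  -- entry bound on the difference of the two moment matrices
  have hEnt : ∀ j j' : Fin m,
      |(n:ℝ)⁻¹ * (∑ i, eps (X i) βt (Yv i) j * eps (X i) βt (Yv i) j')
        - (n:ℝ)⁻¹ * (∑ i, eps (X i) β0 (Yv i) j * eps (X i) β0 (Yv i) j')|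
      ≤ 2 * (Ce * L) * Real.sqrt b4 * K * a := by
    intro j j'
    have hcomb : (n:ℝ)⁻¹ * (∑ i, eps (X i) βt (Yv i) j * eps (X i) βt (Yv i) j')
        - (n:ℝ)⁻¹ * (∑ i, eps (X i) β0 (Yv i) j * eps (X i) β0 (Yv i) j')
        = (n:ℝ)⁻¹ * ∑ i, (eps (X i) βt (Yv i) j * eps (X i) βt (Yv i) j'
            - eps (X i) β0 (Yv i) j * eps (X i) β0 (Yv i) j') := by
      rw [Finset.sum_sub_distrib, mul_sub]
    rw [hcomb, abs_mul, abs_of_nonneg (by positivity : (0:ℝ) ≤ (n:ℝ)⁻¹)]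
    calc (n:ℝ)⁻¹ * |∑ i, (eps (X i) βt (Yv i) j * eps (X i) βt (Yv i) j'
            - eps (X i) β0 (Yv i) j * eps (X i) β0 (Yv i) j')|
        ≤ (n:ℝ)⁻¹ * ∑ i, |eps (X i) βt (Yv i) j * eps (X i) βt (Yv i) j'
            - eps (X i) β0 (Yv i) j * eps (X i) β0 (Yv i) j'| := by
          apply mul_le_mul_of_nonneg_left (Finset.abs_sum_le_sum_abs _ _) (by positivity)
      _ ≤ (n:ℝ)⁻¹ * ∑ i, Ce * L * (|(X i).mulVec βt j - (X i).mulVec β0 j|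
            + |(X i).mulVec βt j' - (X i).mulVec β0 j'|) := by
          gcongr with i hi
          exact hterm i j j'
      _ = Ce * L * ((n:ℝ)⁻¹ * ∑ i, |(X i).mulVec βt j - (X i).mulVec β0 j|)
          + Ce * L * ((n:ℝ)⁻¹ * ∑ i, |(X i).mulVec βt j' - (X i).mulVec β0 j'|) := by
          simp only [Finset.mul_sum]
          rw [← Finset.sum_add_distrib]
          exact Finset.sum_congr rfl fun i _ => by ring
      _ ≤ Ce * L * (Real.sqrt b4 * (K * a)) + Ce * L * (Real.sqrt b4 * (K * a)) := by
          apply add_le_add <;>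
            exact mul_le_mul_of_nonneg_left (havg _) (by positivity)
      _ = 2 * (Ce * L) * Real.sqrt b4 * K * a := by ring
  -- total entrywise bound and Frobenius bound
  have hB : (0:ℝ) ≤ (C1 + 2 * CeL b1 b2 * Real.sqrt b4 * K) * a := by
    have := CeL_nonneg b1 b2
    positivity
  have := fnorm_le_of_entries
    ((Matrix.of fun j j' : Fin m => (n:ℝ)⁻¹ *
        ∑ i, eps (X i) βt (Yv i) j * eps (X i) βt (Yv i) j') - R0)
    ((C1 + 2 * CeL b1 b2 * Real.sqrt b4 * K) * a) hB ?_
  · calc fnorm _ ≤ (m:ℝ) * ((C1 + 2 * CeL b1 b2 * Real.sqrt b4 * K) * a) := this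
      _ = (m * (C1 + 2 * CeL b1 b2 * Real.sqrt b4 * K)) * a := by ring
  · intro j j'
    have h1 := hEnt j j'
    have h2 := hent j j'
    have hCeLrw : Ce * L = CeL b1 b2 := by
      rw [hL_def, hCe_def, hc0_def]; rfl
    have h3 : |((Matrix.of fun j j' : Fin m => (n:ℝ)⁻¹ *
        ∑ i, eps (X i) βt (Yv i) j * eps (X i) βt (Yv i) j') - R0) j j'|
        = |((n:ℝ)⁻¹ * ∑ i, eps (X i) βt (Yv i) j * eps (X i) βt (Yv i) j') - R0 j j'| := by
      simp [Matrix.sub_apply]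
    rw [h3]
    calc |((n:ℝ)⁻¹ * ∑ i, eps (X i) βt (Yv i) j * eps (X i) βt (Yv i) j') - R0 j j'|
        ≤ |(n:ℝ)⁻¹ * (∑ i, eps (X i) βt (Yv i) j * eps (X i) βt (Yv i) j')
            - (n:ℝ)⁻¹ * (∑ i, eps (X i) β0 (Yv i) j * eps (X i) β0 (Yv i) j')|
          + |(n:ℝ)⁻¹ * (∑ i, eps (X i) β0 (Yv i) j * eps (X i) β0 (Yv i) j') - R0 j j'| := by
          have := abs_sub_le ((n:ℝ)⁻¹ * ∑ i, eps (X i) βt (Yv i) j * eps (X i) βt (Yv i) j')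
            ((n:ℝ)⁻¹ * ∑ i, eps (X i) β0 (Yv i) j * eps (X i) β0 (Yv i) j') (R0 j j')
          exact this
      _ ≤ 2 * (Ce * L) * Real.sqrt b4 * K * a + C1 * a := add_le_add h1 h2
      _ = (C1 + 2 * CeL b1 b2 * Real.sqrt b4 * K) * a := by rw [← hCeLrw]; ring


lemma cheb {m n pn : ℕ} (hn : 0 < n) {Ω : Type} [MeasurableSpace Ω]
    (P : Measure Ω) [IsProbabilityMeasure P]
    (X : Fin n → Matrix (Fin m) (Fin pn) ℝ) (Y : Fin n → Ω → Fin m → ℝ)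
    (β0 : Fin pn → ℝ) (R0 : Matrix (Fin m) (Fin m) ℝ)
    (hmeas : ∀ i, Measurable (Y i))
    (hindep : iIndepFun Y P)
    (hcorr : ∀ (i : Fin n) (j j' : Fin m),
      ∫ ω, eps (X i) β0 (Y i ω) j * eps (X i) β0 (Y i ω) j' ∂P = R0 j j')
    (Bd : ℝ) (hBd0 : 0 ≤ Bd)
    (hbound : ∀ i ω j j', |eps (X i) β0 (Y i ω) j * eps (X i) β0 (Y i ω) j'| ≤ Bd)
    (j j' : Fin m) (τ : ℝ) (hτ : 0 < τ) :
    P {ω | τ < |(n:ℝ)⁻¹ * (∑ i, eps (X i) β0 (Y i ω) j * eps (X i) β0 (Y i ω) j') - R0 j j'|}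
      ≤ ENNReal.ofReal (Bd ^ 2 / (n * τ ^ 2)) := by
  have hnR : (0:ℝ) < n := by exact_mod_cast hn
  set φ : Fin n → (Fin m → ℝ) → ℝ :=
    fun i y => eps (X i) β0 y j * eps (X i) β0 y j' with hφ_def
  have hφ : ∀ i, Measurable (φ i) := by
    intro i
    apply Measurable.mul
    · simp only [eps_apply]
      exact ((measurable_pi_apply j).sub measurable_const).const_mul _
    · simp only [eps_apply]
      exact ((measurable_pi_apply j').sub measurable_const).const_mul _
  set V : Fin n → Ω → ℝ := fun i => φ i ∘ Y i with hV_def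
  have hVmeas : ∀ i, Measurable (V i) := fun i => (hφ i).comp (hmeas i)
  have hVbd : ∀ i ω, |V i ω| ≤ Bd := fun i ω => hbound i ω j j'
  have hVmem : ∀ i, MemLp (V i) 2 P := fun i =>
    MemLp.of_bound (hVmeas i).aestronglyMeasurable Bd
      (Filter.Eventually.of_forall fun ω => by rw [Real.norm_eq_abs]; exact hVbd i ω)
  have hTmem : MemLp (∑ i, V i) 2 P := memLp_finset_sum' _ fun i _ => hVmem i
  have hET : ∫ ω, (∑ i, V i) ω ∂P = n * R0 j j' := by
    have h1 : ∫ ω, (∑ i, V i) ω ∂P = ∑ i, ∫ ω, V i ω ∂P := by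
      simp only [Finset.sum_apply]
      exact integral_finset_sum _ fun i _ => (hVmem i).integrable one_le_two
    rw [h1]
    have h2 : ∀ i : Fin n, ∫ ω, V i ω ∂P = R0 j j' := fun i => hcorr i j j'
    rw [Finset.sum_congr rfl fun i _ => h2 i]
    simp [Finset.card_univ]
  have hvar : variance (∑ i, V i) P ≤ n * Bd ^ 2 := by
    have hps : Set.Pairwise ↑(Finset.univ : Finset (Fin n))
        fun i k => IndepFun (V i) (V k) P := by
      intro i _ k _ hik
      exact (hindep.indepFun hik).comp (hφ i) (hφ k)
    rw [IndepFun.variance_sum (fun i _ => hVmem i) hps]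
    calc ∑ i, variance (V i) P ≤ ∑ _i : Fin n, Bd ^ 2 := by
          apply Finset.sum_le_sum
          intro i _
          calc variance (V i) P ≤ ∫ ω, (V i ^ 2) ω ∂P :=
                variance_le_expectation_sq (hVmeas i).aestronglyMeasurable
            _ ≤ ∫ _ω, Bd ^ 2 ∂P := by
                apply integral_mono (hVmem i).integrable_sq (integrable_const _)
                intro ω
                simp only [Pi.pow_apply]
                calc V i ω ^ 2 = |V i ω| ^ 2 := (sq_abs _).symm
                  _ ≤ Bd ^ 2 := by nlinarith [hVbd i ω, abs_nonneg (V i ω)]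
            _ = Bd ^ 2 := by simp
      _ = n * Bd ^ 2 := by simp [Finset.card_univ]
  have hcheb := meas_ge_le_variance_div_sq (μ := P) hTmem
    (c := (n:ℝ) * τ) (by positivity)
  have hsub : {ω | τ < |(n:ℝ)⁻¹ * (∑ i, eps (X i) β0 (Y i ω) j * eps (X i) β0 (Y i ω) j')
        - R0 j j'|}
      ⊆ {ω | (n:ℝ) * τ ≤ |(∑ i, V i) ω - ∫ ω', (∑ i, V i) ω' ∂P|} := by
    intro ω hω
    simp only [Set.mem_setOf_eq] at hω ⊢
    rw [hET]
    have hsum : (∑ i, V i) ω = ∑ i, eps (X i) β0 (Y i ω) j * eps (X i) β0 (Y i ω) j' := by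
      simp [hV_def, hφ_def]
    rw [hsum]
    have hkey : ∑ i, eps (X i) β0 (Y i ω) j * eps (X i) β0 (Y i ω) j' - n * R0 j j'
        = (n:ℝ) * ((n:ℝ)⁻¹ * (∑ i, eps (X i) β0 (Y i ω) j * eps (X i) β0 (Y i ω) j')
          - R0 j j') := by
      field_simp
    rw [hkey, abs_mul, abs_of_pos hnR]
    have := mul_le_mul_of_nonneg_left hω.le hnR.le
    linarith
  calc P {ω | τ < |(n:ℝ)⁻¹ * (∑ i, eps (X i) β0 (Y i ω) j * eps (X i) β0 (Y i ω) j') - R0 j j'|}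
      ≤ P {ω | (n:ℝ) * τ ≤ |(∑ i, V i) ω - ∫ ω', (∑ i, V i) ω' ∂P|} := measure_mono hsub
    _ ≤ ENNReal.ofReal (variance (∑ i, V i) P / ((n:ℝ) * τ) ^ 2) := hcheb
    _ ≤ ENNReal.ofReal (Bd ^ 2 / (n * τ ^ 2)) := by
        apply ENNReal.ofReal_le_ofReal
        have h1 : variance (∑ i, V i) P / ((n:ℝ) * τ) ^ 2
            ≤ ((n:ℝ) * Bd ^ 2) / ((n:ℝ) * τ) ^ 2 := by gcongr
        have h2 : ((n:ℝ) * Bd ^ 2) / ((n:ℝ) * τ) ^ 2 = Bd ^ 2 / ((n:ℝ) * τ ^ 2) := by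
          field_simp
        rw [h2] at h1
        exact h1

end GEEAux

open GEEAux

attribute [local instance] Matrix.frobeniusSeminormedAddCommGroup
  Matrix.frobeniusNormedAddCommGroup Matrix.frobeniusNormedRing
  Matrix.frobeniusNormedSpace Matrix.frobeniusNormedAlgebra

set_option maxHeartbeats 2000000 in
/-- the unstructured moment estimator of the working correlation matrix
satisfies ‖R̂⁻¹ − R₀⁻¹‖_F = O_p(√(p_n/n)). -/
theorem gee_working_correlation_estimation
    (m : ℕ) (hm : 0 < m) (p : ℕ → ℕ) (hp : ∀ n, 0 < p n)
    (Ω : ℕ → Type) [∀ n, MeasurableSpace (Ω n)]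
    (P : ∀ n, Measure (Ω n)) [∀ n, IsProbabilityMeasure (P n)]
    (X : ∀ n, Fin n → Matrix (Fin m) (Fin (p n)) ℝ)
    (Y : ∀ n, Fin n → Ω n → Fin m → ℝ)
    (β0 : ∀ n, Fin (p n) → ℝ)
    (hmeas : ∀ n i, Measurable (Y n i))
    (hbin : ∀ n i ω j, Y n i ω j = 0 ∨ Y n i ω j = 1)
    (hindep : ∀ n, iIndepFun (fun i => Y n i) (P n))
    (hmean : ∀ n (i : Fin n) j, ∫ ω, Y n i ω j ∂(P n) = piv (X n i) (β0 n) j)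
    (R0 : Matrix (Fin m) (Fin m) ℝ) (hR0 : R0.PosDef)
    (hcorr : ∀ n (i : Fin n) j j',
      ∫ ω, eps (X n i) (β0 n) (Y n i ω) j * eps (X n i) (β0 n) (Y n i ω) j' ∂(P n) = R0 j j')
    (hA1 : ∃ C : ℝ, ∀ n (i : Fin n) j, vnorm (X n i j) ≤ C * Real.sqrt (p n))
    (b1 b2 : ℝ) (hb1 : 0 < b1) (hb2 : b2 < 1)
    (hA2 : ∀ n (i : Fin n) j, b1 ≤ piv (X n i) (β0 n) j ∧ piv (X n i) (β0 n) j ≤ b2)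
    (hA2c : ∀ n, ∃ B : Set (Fin (p n) → ℝ), IsCompact B ∧ β0 n ∈ interior B)
    (b3 b4 : ℝ) (hb3 : 0 < b3)
    (hA3 : ∀ n, 0 < n → ∀ v : Fin (p n) → ℝ,
      b3 * (∑ k, v k ^ 2) ≤ (n : ℝ)⁻¹ * (v ⬝ᵥ (∑ i, (X n i)ᵀ * X n i).mulVec v) ∧
      (n : ℝ)⁻¹ * (v ⬝ᵥ (∑ i, (X n i)ᵀ * X n i).mulVec v) ≤ b4 * (∑ k, v k ^ 2))
    (βt : ∀ n, Ω n → Fin (p n) → ℝ)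
    (hβt : IsBigOP P (fun n ω => vnorm (βt n ω - β0 n)) (fun n => Real.sqrt (p n / n)))
    (hrate : Tendsto (fun n => (p n : ℝ) ^ 2 / n) atTop (𝓝 0)) :
    IsBigOP P (fun n ω => fnorm
        ((Matrix.of fun j j' : Fin m => (n : ℝ)⁻¹ *
            ∑ i, eps (X n i) (βt n ω) (Y n i ω) j * eps (X n i) (βt n ω) (Y n i ω) j')⁻¹
          - R0⁻¹))
      (fun n => Real.sqrt (p n / n)) := by

  classical
  intro ε hε
  obtain ⟨CX, hCX⟩ := hA1
  obtain ⟨K, hKpos, hKev⟩ := hβt (ε/2) (by linarith)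
  set c0 : ℝ := GEEAux.c0v b1 b2 with hc0_def
  have hc0 : 0 < c0 := by rw [hc0_def]; unfold GEEAux.c0v; nlinarith
  set Ce : ℝ := (Real.sqrt c0)⁻¹ with hCe_def
  have hCe : 0 < Ce := by rw [hCe_def]; positivity
  set Bd : ℝ := Ce ^ 2 with hBd_def
  have hBd : 0 < Bd := by rw [hBd_def]; positivity
  have hm1 : (1:ℝ) ≤ m := by exact_mod_cast hm
  set A0 : ℝ := 2 * (m:ℝ)^2 * Bd^2 / ε with hA0_def
  have hA0 : 0 ≤ A0 := by rw [hA0_def]; positivity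
  set C1 : ℝ := Real.sqrt A0 + 1 with hC1_def
  have hC1 : 0 < C1 := by rw [hC1_def]; positivity
  have hC1sq : A0 ≤ C1 ^ 2 := by
    rw [hC1_def]
    nlinarith [Real.sq_sqrt hA0, Real.sqrt_nonneg A0]
  set CX' : ℝ := max CX 0 with hCX'_def
  have hCX'0 : 0 ≤ CX' := le_max_right _ _
  have hCX' : ∀ n (i : Fin n) j, vnorm (X n i j) ≤ CX' * Real.sqrt (p n) := by
    intro n i j
    refine le_trans (hCX n i j) ?_
    exact mul_le_mul_of_nonneg_right (le_max_left _ _) (Real.sqrt_nonneg _)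
  set b4' : ℝ := max b4 0 with hb4'_def
  have hb4' : 0 ≤ b4' := le_max_right _ _
  set C3 : ℝ := (m:ℝ) * (C1 + 2 * GEEAux.CeL b1 b2 * Real.sqrt b4' * K) with hC3_def
  have hC3 : 0 ≤ C3 := by
    have h1 := GEEAux.CeL_nonneg b1 b2
    rw [hC3_def]
    have h2 : 0 ≤ C1 + 2 * GEEAux.CeL b1 b2 * Real.sqrt b4' * K := by positivity
    positivity
  set lam : ℝ := fnorm (R0⁻¹) with hlam_def
  have hlamn : lam = ‖R0⁻¹‖ := GEEAux.fnorm_eq_norm _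
  have hlam : 0 ≤ lam := by rw [hlamn]; exact norm_nonneg _
  set N1 : ℝ := fnorm (1 : Matrix (Fin m) (Fin m) ℝ) with hN1_def
  have hN1n : N1 = ‖(1 : Matrix (Fin m) (Fin m) ℝ)‖ := GEEAux.fnorm_eq_norm _
  have hN1 : 0 ≤ N1 := by rw [hN1n]; exact norm_nonneg _
  set Cfin : ℝ := 2 * N1 * lam^2 * C3 + 1 with hCfin_def
  have hCfin : 0 < Cfin := by rw [hCfin_def]; positivity
  refine ⟨Cfin, hCfin, ?_⟩
  -- eventual smallness conditions
  have hsq2 : Tendsto (fun n => Real.sqrt ((p n : ℝ)^2 / n)) atTop (𝓝 0) := by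
    exact (Real.continuous_sqrt.tendsto' 0 0 Real.sqrt_zero).comp hrate
  have hle : ∀ n : ℕ, ((p n : ℝ) / n) ≤ ((p n : ℝ)^2 / n) := by
    intro n
    rcases Nat.eq_zero_or_pos n with h | h
    · simp [h]
    · have hp1 : (1:ℝ) ≤ p n := by exact_mod_cast hp n
      have hnp : (0:ℝ) < n := by exact_mod_cast h
      gcongr
      nlinarith
  have hsq1 : Tendsto (fun n => Real.sqrt ((p n : ℝ) / n)) atTop (𝓝 0) :=
    squeeze_zero (fun n => Real.sqrt_nonneg _) (fun n => Real.sqrt_le_sqrt (hle n)) hsq2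
  have hδ : 0 < min (b1 / 2) ((1 - b2) / 2) := by
    apply lt_min <;> linarith
  have hE5 : ∀ᶠ n in atTop,
      CX' * K * Real.sqrt ((p n : ℝ)^2 / n) ≤ min (b1/2) ((1-b2)/2) := by
    have ht : Tendsto (fun n => CX' * K * Real.sqrt ((p n : ℝ)^2 / n)) atTop (𝓝 0) := by
      have := hsq2.const_mul (CX' * K)
      simpa [mul_comm] using this
    exact (ht.eventually_lt_const hδ).mono fun n h => h.le
  have hE4 : ∀ᶠ n in atTop, (lam * C3) * Real.sqrt ((p n : ℝ) / n) ≤ 1/2 := by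
    have ht : Tendsto (fun n => (lam * C3) * Real.sqrt ((p n : ℝ) / n)) atTop (𝓝 0) := by
      have := hsq1.const_mul (lam * C3)
      simpa [mul_comm] using this
    exact (ht.eventually_lt_const (by norm_num : (0:ℝ) < 1/2)).mono fun n h => h.le
  filter_upwards [hKev, Filter.eventually_ge_atTop 1, hE5, hE4] with n hKn hn1 hE5n hE4n
  have hn : 0 < n := hn1
  have hnR : (0:ℝ) < n := by exact_mod_cast hn
  have hpR : (0:ℝ) < p n := by exact_mod_cast hp n
  set a : ℝ := Real.sqrt ((p n : ℝ) / n) with ha_def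
  have ha : 0 < a := by rw [ha_def]; exact Real.sqrt_pos.2 (by positivity)
  -- eps bounds at the truth
  have hepsb : ∀ (i : Fin n) (ω : Ω n) (j : Fin m),
      |eps (X n i) (β0 n) (Y n i ω) j| ≤ Ce := by
    intro i ω j
    have h2 := (hA2 n i j).1
    have h3 := (hA2 n i j).2
    rw [GEEAux.eps_apply, hCe_def]
    apply GEEAux.eps_entry_bound hc0
    · rw [hc0_def]; unfold GEEAux.c0v; nlinarith
    · rcases hbin n i ω j with h | h <;> rw [h, abs_le] <;> constructor <;> nlinarith
  have hboundV : ∀ (i : Fin n) (ω : Ω n) (j j' : Fin m),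
      |eps (X n i) (β0 n) (Y n i ω) j * eps (X n i) (β0 n) (Y n i ω) j'| ≤ Bd := by
    intro i ω j j'
    rw [abs_mul, hBd_def, sq]
    exact mul_le_mul (hepsb i ω j) (hepsb i ω j') (abs_nonneg _) hCe.le
  -- bad events
  set bad0 : Set (Ω n) := {ω | K * a < |vnorm (βt n ω - β0 n)|} with hbad0_def
  set bad : Fin m → Fin m → Set (Ω n) := fun j j' =>
    {ω | C1 * a < |(n:ℝ)⁻¹ * (∑ i, eps (X n i) (β0 n) (Y n i ω) j
        * eps (X n i) (β0 n) (Y n i ω) j') - R0 j j'|} with hbad_def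
  have hbadP : ∀ j j', P n (bad j j') ≤ ENNReal.ofReal (ε / (2 * (m:ℝ)^2)) := by
    intro j j'
    have h := GEEAux.cheb hn (P n) (X n) (Y n) (β0 n) R0 (hmeas n) (hindep n)
      (fun i j j' => hcorr n i j j') Bd hBd.le (fun i ω j j' => hboundV i ω j j')
      j j' (C1 * a) (by positivity)
    refine le_trans h (ENNReal.ofReal_le_ofReal ?_)
    have hasq : a^2 = (p n : ℝ)/n := by rw [ha_def]; exact Real.sq_sqrt (by positivity)
    have hkey : (n:ℝ) * (C1 * a)^2 = C1^2 * p n := by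
      have h1 : (n:ℝ) * (C1 * a)^2 = C1^2 * ((n:ℝ) * a^2) := by ring
      rw [h1, hasq]
      field_simp
    rw [hkey, div_le_div_iff₀ (by positivity) (by positivity)]
    have hp1 : (1:ℝ) ≤ p n := by exact_mod_cast hp n
    have h2 : 2*(m:ℝ)^2*Bd^2 ≤ C1^2 * ε := by
      have h3 := hC1sq
      rw [hA0_def, div_le_iff₀ hε] at h3
      linarith
    calc Bd^2 * (2*(m:ℝ)^2) = 2*(m:ℝ)^2*Bd^2 := by ring
      _ ≤ C1^2 * ε := h2
      _ = ε * (C1^2 * 1) := by ring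
      _ ≤ ε * (C1^2 * (p n : ℝ)) := by gcongr
  -- deterministic inclusion
  have hdet0 : IsUnit R0.det := isUnit_iff_ne_zero.2 (ne_of_gt hR0.det_pos)
  have hsubset : {ω | Cfin * a < |fnorm
        ((Matrix.of fun j j' : Fin m => (n : ℝ)⁻¹ *
            ∑ i, eps (X n i) (βt n ω) (Y n i ω) j * eps (X n i) (βt n ω) (Y n i ω) j')⁻¹
          - R0⁻¹)|}
      ⊆ bad0 ∪ ⋃ j, ⋃ j', bad j j' := by
    intro ω hω
    by_contra hcon
    simp only [Set.mem_union, Set.mem_iUnion, not_or, not_exists] at hcon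
    obtain ⟨h0, hjj⟩ := hcon
    have hΔ : vnorm (βt n ω - β0 n) ≤ K * a := by
      rw [hbad0_def] at h0
      simp only [Set.mem_setOf_eq, not_lt] at h0
      exact le_trans (le_abs_self _) h0
    have hentω : ∀ j j', |(n:ℝ)⁻¹ * (∑ i, eps (X n i) (β0 n) (Y n i ω) j
        * eps (X n i) (β0 n) (Y n i ω) j') - R0 j j'| ≤ C1 * a := by
      intro j j'
      have h1 := hjj j j'
      rw [hbad_def] at h1
      simp only [Set.mem_setOf_eq, not_lt] at h1
      exact h1
    have hsmallω : ∀ (i : Fin n) (j : Fin m),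
        |(X n i).mulVec (βt n ω) j - (X n i).mulVec (β0 n) j|
          ≤ min (b1/2) ((1-b2)/2) := by
      intro i j
      have hrwv : (X n i).mulVec (βt n ω) j - (X n i).mulVec (β0 n) j
          = (X n i).mulVec (βt n ω - β0 n) j := by
        rw [Matrix.mulVec_sub]; rfl
      rw [hrwv]
      have hdot : |(X n i).mulVec (βt n ω - β0 n) j|
          ≤ vnorm (X n i j) * vnorm (βt n ω - β0 n) := by
        have h := GEEAux.abs_dot_le (fun k => X n i j k) (βt n ω - β0 n)
        simpa [Matrix.mulVec, dotProduct] using h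
      calc |(X n i).mulVec (βt n ω - β0 n) j|
          ≤ vnorm (X n i j) * vnorm (βt n ω - β0 n) := hdot
        _ ≤ (CX' * Real.sqrt (p n)) * (K * a) := by
            apply mul_le_mul (hCX' n i j) hΔ (GEEAux.vnorm_nonneg _) (by positivity)
        _ = CX' * K * (Real.sqrt (p n) * a) := by ring
        _ = CX' * K * Real.sqrt ((p n : ℝ)^2 / n) := by
            rw [ha_def, ← Real.sqrt_mul (by positivity)]
            congr 2
            ring
        _ ≤ min (b1/2) ((1-b2)/2) := hE5n
    have hA3u : ∀ v : Fin (p n) → ℝ,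
        (n:ℝ)⁻¹ * (v ⬝ᵥ (∑ i, (X n i)ᵀ * X n i).mulVec v) ≤ b4' * ∑ k, v k ^ 2 := by
      intro v
      refine le_trans (hA3 n hn v).2 ?_
      apply mul_le_mul_of_nonneg_right (le_max_left _ _)
      exact Finset.sum_nonneg fun k _ => sq_nonneg _
    have hcore := GEEAux.core hn hm (X n) (fun i => Y n i ω) (β0 n) (βt n ω) R0
      b1 b2 b4' K C1 hb1 hb2 hb4' hKpos.le hC1.le
      (fun i j => hbin n i ω j) (fun i j => hA2 n i j) hA3u hΔ hsmallω hentω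
    set Rhat : Matrix (Fin m) (Fin m) ℝ := Matrix.of fun j j' : Fin m => (n : ℝ)⁻¹ *
        ∑ i, eps (X n i) (βt n ω) (Y n i ω) j * eps (X n i) (βt n ω) (Y n i ω) j'
      with hRhat_def
    set E : Matrix (Fin m) (Fin m) ℝ := Rhat - R0 with hE_def
    have hfE : fnorm E ≤ C3 * a := by
      rw [hE_def, hRhat_def]
      exact le_trans hcore (by rw [hC3_def])
    have hnE : ‖E‖ ≤ C3 * a := by rw [← GEEAux.fnorm_eq_norm]; exact hfE
    have hsmallT : ‖R0⁻¹ * E‖ ≤ 1/2 := by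
      calc ‖R0⁻¹ * E‖ ≤ ‖R0⁻¹‖ * ‖E‖ := norm_mul_le _ _
        _ ≤ lam * (C3 * a) := by
            rw [← hlamn]
            exact mul_le_mul le_rfl hnE (norm_nonneg _) hlam
        _ = (lam * C3) * a := by ring
        _ ≤ 1/2 := hE4n
    have hpert := GEEAux.inv_perturb R0 E hdet0 hsmallT
    have hRE : R0 + E = Rhat := by rw [hE_def]; exact add_sub_cancel _ _
    rw [hRE] at hpert
    have hZ : fnorm (Rhat⁻¹ - R0⁻¹) ≤ 2*N1*lam^2*C3*a := by
      rw [GEEAux.fnorm_eq_norm]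
      calc ‖Rhat⁻¹ - R0⁻¹‖
          ≤ 2 * ‖(1 : Matrix (Fin m) (Fin m) ℝ)‖ * ‖R0⁻¹‖^2 * ‖E‖ := hpert
        _ ≤ 2 * N1 * lam^2 * (C3 * a) := by
            rw [← hlamn, ← hN1n]
            exact mul_le_mul_of_nonneg_left hnE (by positivity)
        _ = 2*N1*lam^2*C3*a := by ring
    simp only [Set.mem_setOf_eq] at hω
    have habs : |fnorm (Rhat⁻¹ - R0⁻¹)| = fnorm (Rhat⁻¹ - R0⁻¹) :=
      abs_of_nonneg (Real.sqrt_nonneg _)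
    rw [habs] at hω
    have hcontra : Cfin * a < 2*N1*lam^2*C3*a := lt_of_lt_of_le hω hZ
    rw [hCfin_def] at hcontra
    linarith
  -- measure bound
  calc P n {ω | Cfin * a < |fnorm
        ((Matrix.of fun j j' : Fin m => (n : ℝ)⁻¹ *
            ∑ i, eps (X n i) (βt n ω) (Y n i ω) j * eps (X n i) (βt n ω) (Y n i ω) j')⁻¹
          - R0⁻¹)|}
      ≤ P n (bad0 ∪ ⋃ j, ⋃ j', bad j j') := measure_mono hsubset
    _ ≤ P n bad0 + P n (⋃ j, ⋃ j', bad j j') := measure_union_le _ _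
    _ ≤ ENNReal.ofReal (ε/2) + ∑ j : Fin m, ∑ j' : Fin m,
          ENNReal.ofReal (ε / (2 * (m:ℝ)^2)) := by
        apply add_le_add
        · exact hKn
        · calc P n (⋃ j, ⋃ j', bad j j') ≤ ∑ j : Fin m, P n (⋃ j', bad j j') :=
              measure_iUnion_fintype_le _ _
            _ ≤ ∑ j : Fin m, ∑ j' : Fin m, P n (bad j j') := by
                apply Finset.sum_le_sum
                intro j _
                exact measure_iUnion_fintype_le _ _
            _ ≤ ∑ j : Fin m, ∑ j' : Fin m, ENNReal.ofReal (ε / (2 * (m:ℝ)^2)) := by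
                apply Finset.sum_le_sum
                intro j _
                apply Finset.sum_le_sum
                intro j' _
                exact hbadP j j'
    _ ≤ ENNReal.ofReal ε := by
        have hsum : (∑ _j : Fin m, ∑ _j' : Fin m, ENNReal.ofReal (ε / (2 * (m:ℝ)^2)))
            = (m * m : ℕ) * ENNReal.ofReal (ε / (2 * (m:ℝ)^2)) := by
          simp [Finset.sum_const, Finset.card_univ, mul_assoc]
        rw [hsum]
        have h1 : ((m * m : ℕ) : ℝ≥0∞) * ENNReal.ofReal (ε / (2 * (m:ℝ)^2))
            = ENNReal.ofReal (((m * m : ℕ) : ℝ) * (ε / (2 * (m:ℝ)^2))) := by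
          rw [← ENNReal.ofReal_natCast, ← ENNReal.ofReal_mul (by positivity)]
        rw [h1]
        have h2 : ((m * m : ℕ) : ℝ) * (ε / (2 * (m:ℝ)^2)) = ε/2 := by
          have hmne : (m:ℝ) ≠ 0 := by positivity
          push_cast
          field_simp
        rw [h2, ← ENNReal.ofReal_add (by linarith) (by linarith)]
        apply ENNReal.ofReal_le_ofReal
        linarith
end
end

section
/- Assume conditions (A1)–(A4). If p_n^2/n = o(1), then ||S_n(β_{n0}) − S̄_n(β_{n0})|| = O_p(p_n). -/
open MeasureTheory ProbabilityTheory Filter Matrix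
open scoped BigOperators ENNReal NNReal Topology

noncomputable section

open GEE

namespace GEEaux

lemma integrable_of_bdd {Ω : Type*} [MeasurableSpace Ω] {P : Measure Ω} [IsProbabilityMeasure P]
    {f : Ω → ℝ} (hf : Measurable f) {K : ℝ} (hK : ∀ ω, |f ω| ≤ K) : Integrable f P :=
  (memLp_top_of_bound hf.aestronglyMeasurable K
    (Filter.Eventually.of_forall (by simpa [Real.norm_eq_abs] using hK))).integrable le_top

lemma Scluster_apply {a b : ℕ} (Xi : Matrix (Fin a) (Fin b) ℝ) (W : Matrix (Fin a) (Fin a) ℝ)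
    (β : Fin b → ℝ) (Yi : Fin a → ℝ) (q : Fin b) :
    Scluster Xi W β Yi q
      = ∑ k, ∑ l, (Real.sqrt (piv Xi β k * (1 - piv Xi β k)) * Xi k q) * W k l
          * eps Xi β Yi l := by
  have h : Scluster Xi W β Yi
      = Xiᵀ.mulVec ((Ahalf Xi β).mulVec (W.mulVec (eps Xi β Yi))) := by
    simp [Scluster, eps, Matrix.mulVec_mulVec, Matrix.mul_assoc]
  rw [h]
  have e1 : ∀ w : Fin a → ℝ, Xiᵀ.mulVec w q = ∑ k, Xi k q * w k := by
    intro w; simp [Matrix.mulVec, dotProduct, Matrix.transpose_apply]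
  rw [e1]
  refine Finset.sum_congr rfl fun k _ => ?_
  rw [show (Ahalf Xi β).mulVec (W.mulVec (eps Xi β Yi)) k
      = Real.sqrt (piv Xi β k * (1 - piv Xi β k)) * (W.mulVec (eps Xi β Yi)) k from
      Matrix.mulVec_diagonal _ _ _]
  have e3 : W.mulVec (eps Xi β Yi) k = ∑ l, W k l * eps Xi β Yi l := rfl
  rw [e3, Finset.mul_sum, Finset.mul_sum]
  exact Finset.sum_congr rfl fun l _ => by ring

lemma cs_vnorm {pn m : ℕ} (D : Matrix (Fin m) (Fin m) ℝ) (v : Fin m → Fin m → Fin pn → ℝ) :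
    vnorm (fun q => ∑ k, ∑ l, D k l * v k l q) ≤
      fnorm D * Real.sqrt (∑ k, ∑ l, ∑ q, (v k l q)^2) := by
  rw [vnorm, fnorm, ← Real.sqrt_mul (by positivity)]
  apply Real.sqrt_le_sqrt
  have h1 : ∀ q : Fin pn, (∑ k, ∑ l, D k l * v k l q)^2
      ≤ (∑ k, ∑ l, (D k l)^2) * (∑ k, ∑ l, (v k l q)^2) := by
    intro q
    have key := Finset.sum_mul_sq_le_sq_mul_sq (Finset.univ ×ˢ Finset.univ)
      (fun x : Fin m × Fin m => D x.1 x.2) (fun x : Fin m × Fin m => v x.1 x.2 q)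
    rw [Finset.sum_product, Finset.sum_product, Finset.sum_product] at key
    simpa using key
  calc ∑ q, (∑ k, ∑ l, D k l * v k l q)^2
      ≤ ∑ q, (∑ k, ∑ l, (D k l)^2) * (∑ k, ∑ l, (v k l q)^2) :=
        Finset.sum_le_sum fun q _ => h1 q
    _ = (∑ k, ∑ l, (D k l)^2) * (∑ k, ∑ l, ∑ q, (v k l q)^2) := by
        rw [← Finset.mul_sum]
        congr 1
        rw [Finset.sum_comm]
        exact Finset.sum_congr rfl fun k _ => Finset.sum_comm

lemma second_moment_sum {Ω : Type*} [MeasurableSpace Ω] (P : Measure Ω) [IsProbabilityMeasure P]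
    {n : ℕ} (Z : Fin n → Ω → ℝ) (hZm : ∀ i, Measurable (Z i))
    {K : ℝ} (hKb : ∀ i ω, |Z i ω| ≤ K)
    (hmean : ∀ i, ∫ ω, Z i ω ∂P = 0)
    (hind : ∀ i j, i ≠ j → IndepFun (Z i) (Z j) P)
    (c : Fin n → ℝ) :
    ∫ ω, (∑ i, c i * Z i ω)^2 ∂P ≤ K^2 * ∑ i, (c i)^2 := by
  have hint : ∀ i, Integrable (Z i) P := fun i => integrable_of_bdd (hZm i) (hKb i)
  have hintmul : ∀ i j, Integrable (fun ω => Z i ω * Z j ω) P := by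
    intro i j
    refine integrable_of_bdd ((hZm i).mul (hZm j)) (K := K^2) fun ω => ?_
    rw [abs_mul, sq]
    exact mul_le_mul (hKb i ω) (hKb j ω) (abs_nonneg _) ((abs_nonneg _).trans (hKb i ω))
  have hexp : ∀ ω : Ω, (∑ i, c i * Z i ω)^2
      = ∑ i, ∑ j, (c i * c j) * (Z i ω * Z j ω) := by
    intro ω
    rw [sq, Finset.sum_mul_sum]
    exact Finset.sum_congr rfl fun i _ => Finset.sum_congr rfl fun j _ => by ring
  have hI : ∫ ω, (∑ i, c i * Z i ω)^2 ∂P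
      = ∑ i, ∑ j, (c i * c j) * ∫ ω, Z i ω * Z j ω ∂P := by
    simp_rw [hexp]
    rw [integral_finset_sum _ fun i _ =>
      integrable_finset_sum _ fun j _ => (hintmul i j).const_mul _]
    refine Finset.sum_congr rfl fun i _ => ?_
    rw [integral_finset_sum _ fun j _ => (hintmul i j).const_mul _]
    exact Finset.sum_congr rfl fun j _ => integral_const_mul _ _
  have hoff : ∀ i j, i ≠ j → ∫ ω, Z i ω * Z j ω ∂P = 0 := by
    intro i j hij
    have := (hind i j hij).integral_mul_eq_mul_integral (hint i).aestronglyMeasurable (hint j).aestronglyMeasurable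
    simpa [Pi.mul_apply, hmean i, hmean j] using this
  have hdiag : ∀ i : Fin n, ∫ ω, Z i ω * Z i ω ∂P ≤ K^2 := by
    intro i
    calc ∫ ω, Z i ω * Z i ω ∂P ≤ ∫ _ω, K^2 ∂P := by
          refine integral_mono (hintmul i i) (integrable_const _) fun ω => ?_
          have h := abs_le.mp (hKb i ω)
          nlinarith [h.1, h.2]
      _ = K^2 := by simp
  rw [hI]
  have hrow : ∀ i : Fin n, (∑ j, (c i * c j) * ∫ ω, Z i ω * Z j ω ∂P) ≤ (c i)^2 * K^2 := by
    intro i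
    rw [Finset.sum_eq_single i]
    · calc (c i * c i) * ∫ ω, Z i ω * Z i ω ∂P ≤ (c i * c i) * K^2 :=
            mul_le_mul_of_nonneg_left (hdiag i) (mul_self_nonneg _)
        _ = (c i)^2 * K^2 := by ring
    · intro j _ hji
      rw [hoff i j (Ne.symm hji)]; ring
    · intro h; exact absurd (Finset.mem_univ i) h
  calc ∑ i, ∑ j, (c i * c j) * ∫ ω, Z i ω * Z j ω ∂P ≤ ∑ i, (c i)^2 * K^2 :=
        Finset.sum_le_sum fun i _ => hrow i
    _ = K^2 * ∑ i, (c i)^2 := by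
        rw [Finset.mul_sum]; exact Finset.sum_congr rfl fun i _ => by ring

lemma markov_sq {Ω : Type*} [MeasurableSpace Ω] (P : Measure Ω) [IsProbabilityMeasure P]
    {T : Ω → ℝ} (hint : Integrable (fun ω => T ω ^ 2) P)
    {K : ℝ} (hmom : ∫ ω, T ω ^ 2 ∂P ≤ K) {t : ℝ} (ht : 0 < t) :
    P {ω | t < T ω} ≤ ENNReal.ofReal (K / t^2) := by
  have hsub : {ω | t < T ω} ⊆ {ω | t^2 ≤ T ω ^ 2} := fun ω hω =>
    pow_le_pow_left₀ ht.le (le_of_lt hω) 2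
  refine (measure_mono hsub).trans ?_
  have hmar := mul_meas_ge_le_integral_of_nonneg
    (Filter.Eventually.of_forall fun ω => sq_nonneg (T ω)) hint (t^2)
  have ht2 : 0 < t^2 := by positivity
  have hfin : P {ω | t^2 ≤ T ω ^ 2} ≠ ⊤ := measure_ne_top _ _
  have htr : (P {ω | t^2 ≤ T ω ^ 2}).toReal ≤ K / t^2 := by
    rw [le_div_iff₀ ht2, mul_comm]
    exact hmar.trans hmom
  calc P {ω | t^2 ≤ T ω ^ 2} = ENNReal.ofReal (P {ω | t^2 ≤ T ω ^ 2}).toReal :=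
        (ENNReal.ofReal_toReal hfin).symm
    _ ≤ ENNReal.ofReal (K / t^2) := ENNReal.ofReal_le_ofReal htr

lemma sum_diff_eq {n m pn : ℕ} (X : Fin n → Matrix (Fin m) (Fin pn) ℝ) (β : Fin pn → ℝ)
    (Yv : Fin n → Fin m → ℝ) (W1 W2 : Matrix (Fin m) (Fin m) ℝ) :
    ((∑ i, Scluster (X i) W1 β (Yv i)) - (∑ i, Scluster (X i) W2 β (Yv i)))
    = fun q => ∑ k, ∑ l, (W1 - W2) k l *
        (∑ i, (Real.sqrt (piv (X i) β k * (1 - piv (X i) β k)) * X i k q)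
          * eps (X i) β (Yv i) l) := by
  funext q
  rw [Pi.sub_apply, Finset.sum_apply, Finset.sum_apply, ← Finset.sum_sub_distrib]
  have step : ∀ (F : Fin n → Fin m → Fin m → ℝ),
      (∑ i, ∑ k, ∑ l, F i k l) = ∑ k, ∑ l, ∑ i, F i k l := by
    intro F
    rw [Finset.sum_comm]
    exact Finset.sum_congr rfl fun k _ => Finset.sum_comm
  calc (∑ i, (Scluster (X i) W1 β (Yv i) q - Scluster (X i) W2 β (Yv i) q))
      = ∑ i, ∑ k, ∑ l, ((Real.sqrt (piv (X i) β k * (1 - piv (X i) β k)) * X i k q)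
          * (W1 - W2) k l * eps (X i) β (Yv i) l) := by
        refine Finset.sum_congr rfl fun i _ => ?_
        rw [Scluster_apply, Scluster_apply, ← Finset.sum_sub_distrib]
        refine Finset.sum_congr rfl fun k _ => ?_
        rw [← Finset.sum_sub_distrib]
        refine Finset.sum_congr rfl fun l _ => ?_
        rw [Matrix.sub_apply]; ring
    _ = ∑ k, ∑ l, ∑ i, ((Real.sqrt (piv (X i) β k * (1 - piv (X i) β k)) * X i k q)
          * (W1 - W2) k l * eps (X i) β (Yv i) l) := step _
    _ = _ := by
        refine Finset.sum_congr rfl fun k _ => Finset.sum_congr rfl fun l _ => ?_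
        rw [Finset.mul_sum]
        exact Finset.sum_congr rfl fun i _ => by ring

end GEEaux

open GEEaux

set_option maxHeartbeats 2000000 in
/-- Lemma 1: ‖S_n(β₀) − S̄_n(β₀)‖ = O_p(p_n). -/
theorem gee_estimating_function_approximation
    (m : ℕ) (hm : 0 < m) (p : ℕ → ℕ) (hp : ∀ n, 0 < p n)
    (Ω : ℕ → Type) [∀ n, MeasurableSpace (Ω n)]
    (P : ∀ n, Measure (Ω n)) [∀ n, IsProbabilityMeasure (P n)]
    (X : ∀ n, Fin n → Matrix (Fin m) (Fin (p n)) ℝ)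
    (Y : ∀ n, Fin n → Ω n → Fin m → ℝ)
    (β0 : ∀ n, Fin (p n) → ℝ)
    (hmeas : ∀ n i, Measurable (Y n i))
    (hbin : ∀ n i ω j, Y n i ω j = 0 ∨ Y n i ω j = 1)
    (hindep : ∀ n, iIndepFun (fun i => Y n i) (P n))
    (hmean : ∀ n (i : Fin n) j, ∫ ω, Y n i ω j ∂(P n) = piv (X n i) (β0 n) j)
    (R0 : Matrix (Fin m) (Fin m) ℝ) (hR0 : R0.PosDef)
    (hcorr : ∀ n (i : Fin n) j j',
      ∫ ω, eps (X n i) (β0 n) (Y n i ω) j * eps (X n i) (β0 n) (Y n i ω) j' ∂(P n) = R0 j j')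
    (hA1 : ∃ C : ℝ, ∀ n (i : Fin n) j, vnorm (X n i j) ≤ C * Real.sqrt (p n))
    (b1 b2 : ℝ) (hb1 : 0 < b1) (hb2 : b2 < 1)
    (hA2 : ∀ n (i : Fin n) j, b1 ≤ piv (X n i) (β0 n) j ∧ piv (X n i) (β0 n) j ≤ b2)
    (hA2c : ∀ n, ∃ B : Set (Fin (p n) → ℝ), IsCompact B ∧ β0 n ∈ interior B)
    (b3 b4 : ℝ) (hb3 : 0 < b3)
    (hA3 : ∀ n, 0 < n → ∀ v : Fin (p n) → ℝ,
      b3 * (∑ k, v k ^ 2) ≤ (n : ℝ)⁻¹ * (v ⬝ᵥ (∑ i, (X n i)ᵀ * X n i).mulVec v) ∧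
      (n : ℝ)⁻¹ * (v ⬝ᵥ (∑ i, (X n i)ᵀ * X n i).mulVec v) ≤ b4 * (∑ k, v k ^ 2))
    (Rbar : Matrix (Fin m) (Fin m) ℝ) (hRbar : Rbar.PosDef)
    (Rhat : ∀ n, Ω n → Matrix (Fin m) (Fin m) ℝ)
    (hA4 : IsBigOP P (fun n ω => fnorm ((Rhat n ω)⁻¹ - Rbar⁻¹))
      (fun n => Real.sqrt (p n / n)))
    (hrate : Tendsto (fun n => (p n : ℝ) ^ 2 / n) atTop (𝓝 0)) :
    IsBigOP P (fun n ω => vnorm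
        ((∑ i, Scluster (X n i) ((Rhat n ω)⁻¹) (β0 n) (Y n i ω)) -
         (∑ i, Scluster (X n i) Rbar⁻¹ (β0 n) (Y n i ω))))
      (fun n => (p n : ℝ)) := by
  classical
  obtain ⟨CX, hCX⟩ := hA1
  have hb12 : (0:ℝ) < b1 * (1 - b2) := by nlinarith
  set Keps : ℝ := (Real.sqrt (b1 * (1 - b2)))⁻¹ with hKeps
  have hKpos : 0 < Keps := by
    rw [hKeps]; exact inv_pos.mpr (Real.sqrt_pos.mpr hb12)
  -- pointwise formula for eps
  have heps : ∀ n (i : Fin n) ω l, eps (X n i) (β0 n) (Y n i ω) l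
      = (Real.sqrt (piv (X n i) (β0 n) l * (1 - piv (X n i) (β0 n) l)))⁻¹
        * (Y n i ω l - piv (X n i) (β0 n) l) := by
    intro n i ω l
    simp [eps, Ainvhalf, Matrix.mulVec_diagonal]
  -- eps bound
  have hepsb : ∀ n (i : Fin n) ω l, |eps (X n i) (β0 n) (Y n i ω) l| ≤ Keps := by
    intro n i ω l
    obtain ⟨h1, h2⟩ := hA2 n i l
    have hππ : b1 * (1 - b2) ≤ piv (X n i) (β0 n) l * (1 - piv (X n i) (β0 n) l) := by nlinarith
    have hd : (Real.sqrt (piv (X n i) (β0 n) l * (1 - piv (X n i) (β0 n) l)))⁻¹ ≤ Keps := by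
      rw [hKeps]
      exact inv_anti₀ (Real.sqrt_pos.mpr hb12) (Real.sqrt_le_sqrt hππ)
    have hY : |Y n i ω l - piv (X n i) (β0 n) l| ≤ 1 := by
      rcases hbin n i ω l with h | h <;> rw [h, abs_le] <;> constructor <;> nlinarith
    rw [heps n i ω l, abs_mul, abs_of_nonneg (inv_nonneg.mpr (Real.sqrt_nonneg _))]
    calc _ ≤ (Real.sqrt (piv (X n i) (β0 n) l * (1 - piv (X n i) (β0 n) l)))⁻¹ * 1 :=
          mul_le_mul_of_nonneg_left hY (inv_nonneg.mpr (Real.sqrt_nonneg _))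
      _ ≤ _ := by rw [mul_one]; exact hd
  -- eps measurable
  have hepsm : ∀ n (i : Fin n) l, Measurable (fun ω => eps (X n i) (β0 n) (Y n i ω) l) := by
    intro n i l
    simp_rw [heps n i _ l]
    exact (((measurable_pi_apply l).comp (hmeas n i)).sub measurable_const).const_mul _
  -- eps mean zero
  have heps0 : ∀ n (i : Fin n) l, ∫ ω, eps (X n i) (β0 n) (Y n i ω) l ∂(P n) = 0 := by
    intro n i l
    simp_rw [heps n i _ l]
    rw [integral_const_mul, integral_sub ?_ (integrable_const _)]
    · rw [hmean n i l, integral_const]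
      simp
    · refine integrable_of_bdd ((measurable_pi_apply l).comp (hmeas n i)) (K := 1) fun ω => ?_
      rcases hbin n i ω l with h | h <;> simp [Function.comp, h]
  -- eps independent across clusters
  have hepsi : ∀ n (l : Fin m) (i j : Fin n), i ≠ j →
      IndepFun (fun ω => eps (X n i) (β0 n) (Y n i ω) l)
        (fun ω => eps (X n j) (β0 n) (Y n j ω) l) (P n) := by
    intro n l i j hij
    have base := (hindep n).indepFun hij
    have hcomp := base.comp
      (φ := fun y : Fin m → ℝ =>
        (Real.sqrt (piv (X n i) (β0 n) l * (1 - piv (X n i) (β0 n) l)))⁻¹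
          * (y l - piv (X n i) (β0 n) l))
      (ψ := fun y : Fin m → ℝ =>
        (Real.sqrt (piv (X n j) (β0 n) l * (1 - piv (X n j) (β0 n) l)))⁻¹
          * (y l - piv (X n j) (β0 n) l))
      (((measurable_pi_apply l).sub measurable_const).const_mul _ :
        Measurable (fun y : Fin m → ℝ =>
          (Real.sqrt (piv (X n i) (β0 n) l * (1 - piv (X n i) (β0 n) l)))⁻¹
            * (y l - piv (X n i) (β0 n) l)))
      (((measurable_pi_apply l).sub measurable_const).const_mul _ :
        Measurable (fun y : Fin m → ℝ =>
          (Real.sqrt (piv (X n j) (β0 n) l * (1 - piv (X n j) (β0 n) l)))⁻¹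
            * (y l - piv (X n j) (β0 n) l)))
    have e : (fun ω => eps (X n i) (β0 n) (Y n i ω) l)
        = (fun y : Fin m → ℝ =>
          (Real.sqrt (piv (X n i) (β0 n) l * (1 - piv (X n i) (β0 n) l)))⁻¹
            * (y l - piv (X n i) (β0 n) l)) ∘ (Y n i) := by
      funext ω; exact heps n i ω l
    have e' : (fun ω => eps (X n j) (β0 n) (Y n j ω) l)
        = (fun y : Fin m → ℝ =>
          (Real.sqrt (piv (X n j) (β0 n) l * (1 - piv (X n j) (β0 n) l)))⁻¹
            * (y l - piv (X n j) (β0 n) l)) ∘ (Y n j) := by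
      funext ω; exact heps n j ω l
    rw [e, e']
    exact hcomp
  -- constants
  intro ε hε
  set c' : ℝ := Keps^2 * (m:ℝ)^2 * CX^2 + 1 with hc'def
  have hc' : 0 < c' := by positivity
  obtain ⟨C₁, hC₁, hev⟩ := hA4 (ε/2) (by positivity)
  set C₂ : ℝ := Real.sqrt (2 * c' / ε) with hC₂def
  have hC₂ : 0 < C₂ := Real.sqrt_pos.mpr (by positivity)
  have hC₂sq : C₂^2 = 2 * c' / ε := Real.sq_sqrt (by positivity)
  refine ⟨C₁ * C₂, by positivity, ?_⟩
  filter_upwards [hev, eventually_ge_atTop 1] with n hevn hn1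
  have hn0 : (0:ℝ) < n := by exact_mod_cast hn1
  have hp0 : (0:ℝ) < p n := by exact_mod_cast hp n
  set v : Fin m → Fin m → Fin (p n) → Ω n → ℝ := fun k l q ω =>
    ∑ i, (Real.sqrt (piv (X n i) (β0 n) k * (1 - piv (X n i) (β0 n) k)) * X n i k q)
      * eps (X n i) (β0 n) (Y n i ω) l with hvdef
  set Tsq : Ω n → ℝ := fun ω => ∑ k, ∑ l, ∑ q, (v k l q ω)^2 with hTsqdef
  have hTsqnn : ∀ ω, 0 ≤ Tsq ω := fun ω =>
    Finset.sum_nonneg fun k _ => Finset.sum_nonneg fun l _ =>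
      Finset.sum_nonneg fun q _ => sq_nonneg _
  -- deterministic bound
  have hbound : ∀ ω : Ω n,
      vnorm ((∑ i, Scluster (X n i) ((Rhat n ω)⁻¹) (β0 n) (Y n i ω)) -
         (∑ i, Scluster (X n i) Rbar⁻¹ (β0 n) (Y n i ω)))
      ≤ fnorm ((Rhat n ω)⁻¹ - Rbar⁻¹) * Real.sqrt (Tsq ω) := by
    intro ω
    rw [sum_diff_eq (fun i => X n i) (β0 n) (fun i => Y n i ω) ((Rhat n ω)⁻¹) Rbar⁻¹]
    exact cs_vnorm ((Rhat n ω)⁻¹ - Rbar⁻¹) (fun k l q => v k l q ω)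
  -- measurability and integrability of v
  have hvm : ∀ k l q, Measurable (v k l q) := by
    intro k l q
    exact Finset.measurable_sum _ fun i _ => ((hepsm n i l).const_mul _)
  have hvint : ∀ k l q, Integrable (fun ω => (v k l q ω)^2) (P n) := by
    intro k l q
    refine integrable_of_bdd ((hvm k l q).pow_const 2)
      (K := ((∑ i, |Real.sqrt (piv (X n i) (β0 n) k * (1 - piv (X n i) (β0 n) k)) * X n i k q|)
        * Keps)^2) fun ω => ?_
    rw [abs_pow, ← sq_abs, abs_abs]
    refine pow_le_pow_left₀ (abs_nonneg _) ?_ 2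
    calc |v k l q ω| ≤ ∑ i,
          |(Real.sqrt (piv (X n i) (β0 n) k * (1 - piv (X n i) (β0 n) k)) * X n i k q)
            * eps (X n i) (β0 n) (Y n i ω) l| := Finset.abs_sum_le_sum_abs _ _
      _ ≤ ∑ i, |Real.sqrt (piv (X n i) (β0 n) k * (1 - piv (X n i) (β0 n) k)) * X n i k q|
            * Keps := by
          refine Finset.sum_le_sum fun i _ => ?_
          rw [abs_mul]
          exact mul_le_mul_of_nonneg_left (hepsb n i ω l) (abs_nonneg _)
      _ = _ := (Finset.sum_mul _ _ _).symm
  have hTsqint : Integrable Tsq (P n) := by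
    rw [hTsqdef]
    exact integrable_finset_sum _ fun k _ => integrable_finset_sum _ fun l _ =>
      integrable_finset_sum _ fun q _ => hvint k l q
  -- second moment bound
  have hklq : ∀ k l (q : Fin (p n)), ∫ ω, (v k l q ω)^2 ∂(P n)
      ≤ Keps^2 * ∑ i, (X n i k q)^2 := by
    intro k l q
    have h2 := second_moment_sum (P n)
      (fun i ω => eps (X n i) (β0 n) (Y n i ω) l)
      (fun i => hepsm n i l) (fun i ω => hepsb n i ω l)
      (fun i => heps0 n i l) (fun i j hij => hepsi n l i j hij)
      (fun i => Real.sqrt (piv (X n i) (β0 n) k * (1 - piv (X n i) (β0 n) k)) * X n i k q)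
    refine h2.trans (mul_le_mul_of_nonneg_left (Finset.sum_le_sum fun i _ => ?_) (sq_nonneg _))
    obtain ⟨h1, hh2⟩ := hA2 n i k
    have hnn : 0 ≤ piv (X n i) (β0 n) k * (1 - piv (X n i) (β0 n) k) := by nlinarith
    have hs := Real.sq_sqrt hnn
    rw [mul_pow, hs]
    have hcle : piv (X n i) (β0 n) k * (1 - piv (X n i) (β0 n) k) ≤ 1 := by nlinarith
    exact mul_le_of_le_one_left (sq_nonneg _) hcle
  have hrow : ∀ (i : Fin n) (k : Fin m), ∑ q, (X n i k q)^2 ≤ CX^2 * p n := by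
    intro i k
    have h1 : vnorm (X n i k) ≤ CX * Real.sqrt (p n) := hCX n i k
    have h2 : (vnorm (X n i k))^2 ≤ (CX * Real.sqrt (p n))^2 :=
      pow_le_pow_left₀ (Real.sqrt_nonneg _) h1 2
    rw [vnorm, Real.sq_sqrt (Finset.sum_nonneg fun q _ => sq_nonneg _)] at h2
    calc ∑ q, (X n i k q)^2 ≤ (CX * Real.sqrt (p n))^2 := h2
      _ = CX^2 * p n := by
          rw [mul_pow, Real.sq_sqrt (by positivity : (0:ℝ) ≤ (p n : ℝ))]
  have hmom : ∫ ω, Tsq ω ∂(P n) ≤ c' * ((n:ℝ) * p n) := by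
    have hI : ∫ ω, Tsq ω ∂(P n) = ∑ k, ∑ l, ∑ q, ∫ ω, (v k l q ω)^2 ∂(P n) := by
      rw [hTsqdef]
      rw [integral_finset_sum _ fun k _ => integrable_finset_sum _ fun l _ =>
        integrable_finset_sum _ fun q _ => hvint k l q]
      refine Finset.sum_congr rfl fun k _ => ?_
      rw [integral_finset_sum _ fun l _ => integrable_finset_sum _ fun q _ => hvint k l q]
      exact Finset.sum_congr rfl fun l _ =>
        integral_finset_sum _ fun q _ => hvint k l q
    rw [hI]
    have hkl : ∀ (k l : Fin m), ∑ q, ∫ ω, (v k l q ω)^2 ∂(P n)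
        ≤ Keps^2 * (CX^2 * ((n:ℝ) * p n)) := by
      intro k l
      calc ∑ q, ∫ ω, (v k l q ω)^2 ∂(P n) ≤ ∑ q, Keps^2 * ∑ i, (X n i k q)^2 :=
            Finset.sum_le_sum fun q _ => hklq k l q
        _ = Keps^2 * ∑ i, ∑ q, (X n i k q)^2 := by
            rw [← Finset.mul_sum, Finset.sum_comm]
        _ ≤ Keps^2 * ∑ i : Fin n, CX^2 * p n := by
            refine mul_le_mul_of_nonneg_left (Finset.sum_le_sum fun i _ => hrow i k)
              (sq_nonneg _)
        _ = Keps^2 * (CX^2 * ((n:ℝ) * p n)) := by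
            rw [Finset.sum_const, Finset.card_univ, Fintype.card_fin, nsmul_eq_mul]
            ring
    calc ∑ k, ∑ l, ∑ q, ∫ ω, (v k l q ω)^2 ∂(P n)
        ≤ ∑ _k : Fin m, ∑ _l : Fin m, Keps^2 * (CX^2 * ((n:ℝ) * p n)) :=
          Finset.sum_le_sum fun k _ => Finset.sum_le_sum fun l _ => hkl k _
      _ = (m:ℝ)^2 * (Keps^2 * (CX^2 * ((n:ℝ) * p n))) := by
          rw [Finset.sum_const, Finset.sum_const, Finset.card_univ, Fintype.card_fin]
          simp [nsmul_eq_mul]; ring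
      _ ≤ c' * ((n:ℝ) * p n) := by
          rw [hc'def]
          have hnp : (0:ℝ) ≤ (n:ℝ) * p n := by positivity
          nlinarith [sq_nonneg Keps, sq_nonneg CX, sq_nonneg (m:ℝ)]
  -- Markov bound
  have hT2e : ∀ ω, (Real.sqrt (Tsq ω))^2 = Tsq ω := fun ω => Real.sq_sqrt (hTsqnn ω)
  have hTint : Integrable (fun ω => (Real.sqrt (Tsq ω))^2) (P n) :=
    (integrable_congr (Filter.Eventually.of_forall fun ω => hT2e ω)).mpr hTsqint
  have hTm : ∫ ω, (Real.sqrt (Tsq ω))^2 ∂(P n) ≤ c' * ((n:ℝ) * p n) := by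
    rw [integral_congr_ae (Filter.Eventually.of_forall fun ω => hT2e ω)]
    exact hmom
  have ht : (0:ℝ) < C₂ * Real.sqrt ((n:ℝ) * p n) := by positivity
  have hmar := markov_sq (P n) (T := fun ω => Real.sqrt (Tsq ω)) hTint hTm ht
  have hKt : c' * ((n:ℝ) * p n) / (C₂ * Real.sqrt ((n:ℝ) * p n))^2 = ε/2 := by
    rw [mul_pow, Real.sq_sqrt (by positivity : (0:ℝ) ≤ (n:ℝ) * p n), hC₂sq]
    field_simp
  rw [hKt] at hmar
  -- final assembly
  have hsub : {ω | C₁ * C₂ * (p n) <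
      |vnorm ((∑ i, Scluster (X n i) ((Rhat n ω)⁻¹) (β0 n) (Y n i ω)) -
         (∑ i, Scluster (X n i) Rbar⁻¹ (β0 n) (Y n i ω)))|}
      ⊆ {ω | C₁ * Real.sqrt ((p n : ℝ) / n) < |fnorm ((Rhat n ω)⁻¹ - Rbar⁻¹)|}
        ∪ {ω | C₂ * Real.sqrt ((n:ℝ) * p n) < Real.sqrt (Tsq ω)} := by
    intro ω hω
    rw [Set.mem_union]
    by_contra hc
    push_neg at hc
    obtain ⟨hc1, hc2⟩ := hc
    rw [Set.mem_setOf_eq, not_lt] at hc1 hc2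
    have hf : fnorm ((Rhat n ω)⁻¹ - Rbar⁻¹) ≤ C₁ * Real.sqrt ((p n : ℝ) / n) :=
      (le_abs_self _).trans hc1
    have hprod : fnorm ((Rhat n ω)⁻¹ - Rbar⁻¹) * Real.sqrt (Tsq ω)
        ≤ (C₁ * Real.sqrt ((p n : ℝ) / n)) * (C₂ * Real.sqrt ((n:ℝ) * p n)) := by
      refine mul_le_mul hf hc2 (Real.sqrt_nonneg _) (by positivity)
    have hsqrtprod : Real.sqrt ((p n : ℝ) / n) * Real.sqrt ((n:ℝ) * p n) = p n := by
      rw [← Real.sqrt_mul (by positivity)]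
      rw [show ((p n : ℝ) / n) * ((n:ℝ) * p n) = (p n : ℝ)^2 by field_simp]
      exact Real.sqrt_sq hp0.le
    have hle : vnorm ((∑ i, Scluster (X n i) ((Rhat n ω)⁻¹) (β0 n) (Y n i ω)) -
         (∑ i, Scluster (X n i) Rbar⁻¹ (β0 n) (Y n i ω))) ≤ C₁ * C₂ * p n := by
      refine (hbound ω).trans (hprod.trans (le_of_eq ?_))
      rw [show (C₁ * Real.sqrt ((p n : ℝ) / n)) * (C₂ * Real.sqrt ((n:ℝ) * p n))
        = C₁ * C₂ * (Real.sqrt ((p n : ℝ) / n) * Real.sqrt ((n:ℝ) * p n)) from by ring,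
        hsqrtprod]
    rw [Set.mem_setOf_eq] at hω
    have habs : |vnorm ((∑ i, Scluster (X n i) ((Rhat n ω)⁻¹) (β0 n) (Y n i ω)) -
         (∑ i, Scluster (X n i) Rbar⁻¹ (β0 n) (Y n i ω)))|
        = vnorm ((∑ i, Scluster (X n i) ((Rhat n ω)⁻¹) (β0 n) (Y n i ω)) -
         (∑ i, Scluster (X n i) Rbar⁻¹ (β0 n) (Y n i ω))) :=
      abs_of_nonneg (Real.sqrt_nonneg _)
    rw [habs] at hω
    linarith
  refine (measure_mono hsub).trans ((measure_union_le _ _).trans ?_)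
  have : ENNReal.ofReal ε = ENNReal.ofReal (ε/2) + ENNReal.ofReal (ε/2) := by
    rw [← ENNReal.ofReal_add (by positivity) (by positivity), add_halves]
  rw [this]
  exact add_le_add hevn hmar
end
end

section
/- Assume conditions (A1)–(A4). If p_n^2/n = o(1), then for every Δ > 0, sup over β with ||β − β_{n0}|| ≤ Δ√(p_n/n) and over unit vectors b ∈ R^{p_n} of |b^T [H̄_n(β) − H̄_n(β_{n0})] b| is O_p(√n · p_n). -/
open MeasureTheory ProbabilityTheory Filter Matrix
open scoped BigOperators ENNReal NNReal Topology

noncomputable section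

open GEE


section Aux
open Matrix

private lemma GEEaux_vnorm_single {k : ℕ} (j : Fin k) :
    (∑ l, ((Pi.single j (1:ℝ) : Fin k → ℝ) l) ^ 2) = (1:ℝ) := by
  have h : ∀ l, ((Pi.single j (1:ℝ) : Fin k → ℝ) l) ^ 2 = if l = j then (1:ℝ) else 0 := by
    intro l
    by_cases h : l = j
    · subst h; simp
    · simp [Pi.single_eq_of_ne h, h]
  rw [Finset.sum_congr rfl fun l _ => h l]
  simp

private lemma GEEaux_flog_eq (t : ℝ) :
    Real.sqrt (logistic t * (1 - logistic t)) = (2 * Real.cosh (t/2))⁻¹ := by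
  have h1 : (0:ℝ) < 1 + Real.exp t := by positivity
  have h2 : logistic t * (1 - logistic t) = Real.exp t / (1 + Real.exp t) ^ 2 := by
    unfold logistic; field_simp; ring
  have h3 : Real.exp t = (Real.exp (t/2)) ^ 2 := by
    rw [← Real.exp_nat_mul]; norm_num; ring_nf
  rw [h2, Real.sqrt_div (Real.exp_nonneg t), Real.sqrt_sq h1.le, h3,
    Real.sqrt_sq (Real.exp_nonneg _)]
  rw [Real.cosh_eq]
  have h4 : Real.exp (t/2) ≠ 0 := Real.exp_ne_zero _
  field_simp
  rw [mul_add, ← Real.exp_add, ← Real.exp_add,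
    show t/2 + (t/2) = t by ring, show t/2 + -(t/2) = 0 by ring, Real.exp_zero, h3]
  ring

/-- 1/(2 cosh) is (1/2)-Lipschitz -/
private lemma GEEaux_hcosh_lip : LipschitzWith (1/2) (fun u : ℝ => (2 * Real.cosh u)⁻¹) := by
  have hd : ∀ x : ℝ, HasDerivAt (fun u : ℝ => (2 * Real.cosh u)⁻¹)
      (-(2 * Real.sinh x) / (2 * Real.cosh x) ^ 2) x := by
    intro x
    exact (((Real.hasDerivAt_cosh x).const_mul 2).inv (by positivity))
  apply lipschitzWith_of_nnnorm_deriv_le (fun x => (hd x).differentiableAt)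
  intro x
  rw [← NNReal.coe_le_coe, coe_nnnorm, (hd x).deriv, Real.norm_eq_abs]
  have hc : (0:ℝ) < Real.cosh x := Real.cosh_pos x
  have hs : |Real.sinh x| ≤ Real.cosh x := by
    nlinarith [Real.cosh_sq_sub_sinh_sq x, sq_abs (Real.sinh x), abs_nonneg (Real.sinh x)]
  have h1 : (1:ℝ) ≤ Real.cosh x := Real.one_le_cosh x
  rw [abs_div, abs_neg, abs_mul, abs_of_nonneg (by norm_num : (0:ℝ) ≤ 2),
    abs_of_nonneg (by positivity : (0:ℝ) ≤ (2 * Real.cosh x)^2)]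
  rw [div_le_iff₀ (by positivity)]
  push_cast
  nlinarith

private lemma GEEaux_flog_lip (s t : ℝ) :
    |Real.sqrt (logistic s * (1 - logistic s)) - Real.sqrt (logistic t * (1 - logistic t))|
      ≤ |s - t| / 4 := by
  rw [GEEaux_flog_eq, GEEaux_flog_eq]
  have := GEEaux_hcosh_lip.dist_le_mul (s/2) (t/2)
  rw [Real.dist_eq, Real.dist_eq] at this
  have h2 : |(2 * Real.cosh (s/2))⁻¹ - (2 * Real.cosh (t/2))⁻¹| ≤ (1/2 : ℝ) * |s/2 - t/2| := by
    exact_mod_cast this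
  rw [show s/2 - t/2 = (s-t)/2 by ring, abs_div] at h2
  have : |(2:ℝ)| = 2 := by norm_num
  rw [this] at h2
  linarith

private lemma GEEaux_flog_le_half (t : ℝ) : Real.sqrt (logistic t * (1 - logistic t)) ≤ 1/2 := by
  rw [GEEaux_flog_eq]
  have h1 : (1:ℝ) ≤ Real.cosh (t/2) := Real.one_le_cosh _
  rw [show (1:ℝ)/2 = (2:ℝ)⁻¹ by norm_num]
  exact inv_anti₀ (by norm_num) (by linarith)

private lemma GEEaux_abs_dot_le {k : ℕ} (f g : Fin k → ℝ) : |∑ a, f a * g a| ≤ vnorm f * vnorm g := by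
  have h := Finset.sum_mul_sq_le_sq_mul_sq Finset.univ f g
  rw [vnorm, vnorm, ← Real.sqrt_mul (by positivity)]
  exact Real.abs_le_sqrt h

private lemma GEEaux_quad_expand {m pn : ℕ} (Xi : Matrix (Fin m) (Fin pn) ℝ)
    (W : Matrix (Fin m) (Fin m) ℝ) (g : Fin m → ℝ) (b : Fin pn → ℝ) :
    b ⬝ᵥ ((Xiᵀ * Matrix.diagonal g * W * Matrix.diagonal g * Xi).mulVec b)
      = ∑ j, ∑ k, (Xi.mulVec b j * g j) * W j k * (g k * Xi.mulVec b k) := by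
  rw [show Xiᵀ * Matrix.diagonal g * W * Matrix.diagonal g * Xi
      = Xiᵀ * ((Matrix.diagonal g * W * Matrix.diagonal g) * Xi) by
    simp only [Matrix.mul_assoc]]
  rw [← Matrix.mulVec_mulVec, ← Matrix.mulVec_mulVec, Matrix.dotProduct_mulVec,
    Matrix.vecMul_transpose]
  have hM : ∀ j k, (Matrix.diagonal g * W * Matrix.diagonal g) j k = g j * W j k * g k := by
    intro j k; rw [Matrix.mul_diagonal, Matrix.diagonal_mul]
  simp only [dotProduct, Matrix.mulVec, hM, Finset.mul_sum]
  refine Finset.sum_congr rfl fun j _ => Finset.sum_congr rfl fun k _ =>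
    Finset.sum_congr rfl fun x _ => by ring

private lemma GEEaux_dot_XtX {m pn : ℕ} (Xi : Matrix (Fin m) (Fin pn) ℝ) (b : Fin pn → ℝ) :
    b ⬝ᵥ ((Xiᵀ * Xi).mulVec b) = ∑ j, (Xi.mulVec b j) ^ 2 := by
  rw [← Matrix.mulVec_mulVec, Matrix.dotProduct_mulVec, Matrix.vecMul_transpose]
  simp [dotProduct, sq]

private lemma GEEaux_quadform_sum {pn nn : ℕ} (M : Fin nn → Matrix (Fin pn) (Fin pn) ℝ) (b : Fin pn → ℝ) :
    b ⬝ᵥ (∑ i, M i).mulVec b = ∑ i, b ⬝ᵥ (M i).mulVec b := by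
  have h1 : (∑ i, M i).mulVec b = ∑ i, (M i).mulVec b := by
    ext a
    simp only [Matrix.mulVec, dotProduct, Matrix.sum_apply, Finset.sum_apply,
      Finset.sum_mul]
    exact Finset.sum_comm
  rw [h1]
  simp only [dotProduct, Finset.sum_apply, Finset.mul_sum]
  exact Finset.sum_comm

private lemma GEEaux_sum_sum_const_mul {m : ℕ} (c t : ℝ) (W : Matrix (Fin m) (Fin m) ℝ) :
    ∑ j, ∑ k, c * |W j k| * t = c * (∑ j, ∑ k, |W j k|) * t := by
  rw [Finset.mul_sum, Finset.sum_mul]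
  refine Finset.sum_congr rfl fun j _ => ?_
  rw [Finset.mul_sum, Finset.sum_mul]

private lemma GEEaux_key_bound {m pn nn : ℕ} (hn : 0 < nn)
    (X : Fin nn → Matrix (Fin m) (Fin pn) ℝ) (W : Matrix (Fin m) (Fin m) ℝ)
    (β β0 b : Fin pn → ℝ) (Cx Δ b4 : ℝ) (hCx : 0 ≤ Cx) (hΔ : 0 ≤ Δ)
    (hX : ∀ i j, vnorm (X i j) ≤ Cx * Real.sqrt pn)
    (hβ : vnorm (β - β0) ≤ Δ * Real.sqrt (pn / nn))
    (hA3' : b ⬝ᵥ (∑ i, (X i)ᵀ * X i).mulVec b ≤ b4 * nn) :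
    |b ⬝ᵥ ((∑ i, Hcluster (X i) W β) - (∑ i, Hcluster (X i) W β0)).mulVec b|
      ≤ Cx * Δ / 4 * (∑ j, ∑ k, |W j k|) * b4 * (Real.sqrt nn * pn) := by
  set Kw := ∑ j, ∑ k, |W j k| with hKwdef
  have hKw : 0 ≤ Kw := Finset.sum_nonneg fun j _ => Finset.sum_nonneg fun k _ => abs_nonneg _
  set L := Cx * Real.sqrt pn * (Δ * Real.sqrt ((pn : ℝ) / nn)) with hLdef
  have hL : 0 ≤ L := by positivity
  set u : Fin nn → Fin m → ℝ := fun i => (X i).mulVec b with hu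
  set d : Fin nn → Fin m → ℝ := fun i j =>
    Real.sqrt (logistic ((X i).mulVec β j) * (1 - logistic ((X i).mulVec β j))) with hd
  set e : Fin nn → Fin m → ℝ := fun i j =>
    Real.sqrt (logistic ((X i).mulVec β0 j) * (1 - logistic ((X i).mulVec β0 j))) with he
  set S : Fin nn → ℝ := fun i => ∑ l, u i l ^ 2 with hS
  have hS0 : ∀ i, 0 ≤ S i := fun i => Finset.sum_nonneg fun l _ => sq_nonneg _
  -- step 1: expansion
  have hexp : b ⬝ᵥ ((∑ i, Hcluster (X i) W β) - (∑ i, Hcluster (X i) W β0)).mulVec b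
      = ∑ i, ∑ j, ∑ k,
          ((u i j * d i j) * W j k * (d i k * u i k)
            - (u i j * e i j) * W j k * (e i k * u i k)) := by
    rw [Matrix.sub_mulVec, dotProduct_sub, GEEaux_quadform_sum, GEEaux_quadform_sum,
      ← Finset.sum_sub_distrib]
    refine Finset.sum_congr rfl fun i _ => ?_
    rw [show Hcluster (X i) W β = (X i)ᵀ * Matrix.diagonal (fun j => d i j) * W *
        Matrix.diagonal (fun j => d i j) * X i from rfl,
      show Hcluster (X i) W β0 = (X i)ᵀ * Matrix.diagonal (fun j => e i j) * W *
        Matrix.diagonal (fun j => e i j) * X i from rfl,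
      GEEaux_quad_expand, GEEaux_quad_expand, ← Finset.sum_sub_distrib]
    exact Finset.sum_congr rfl fun j _ => (Finset.sum_sub_distrib _ _).symm
  -- bounds on d, e
  have hdub : ∀ i j, d i j ≤ 1/2 := fun i j => GEEaux_flog_le_half _
  have heub : ∀ i j, e i j ≤ 1/2 := fun i j => GEEaux_flog_le_half _
  have hd0 : ∀ i j, 0 ≤ d i j := fun i j => Real.sqrt_nonneg _
  have he0 : ∀ i j, 0 ≤ e i j := fun i j => Real.sqrt_nonneg _
  have hde : ∀ i j, |d i j - e i j| ≤ L / 4 := by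
    intro i j
    refine le_trans (GEEaux_flog_lip _ _) ?_
    have h1 : (X i).mulVec β j - (X i).mulVec β0 j = ∑ a, X i j a * (β - β0) a := by
      rw [show (X i).mulVec β j - (X i).mulVec β0 j = ((X i).mulVec (β - β0)) j from by
        rw [Matrix.mulVec_sub]; simp]
      simp [Matrix.mulVec, dotProduct]
    rw [h1]
    have h2 := GEEaux_abs_dot_le (X i j) (β - β0)
    have h3 : vnorm (X i j) * vnorm (β - β0) ≤ L := by
      rw [hLdef]
      exact mul_le_mul (hX i j) hβ (Real.sqrt_nonneg _) (by positivity)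
    linarith
  -- per-term bound
  have hterm : ∀ i j k,
      |(u i j * d i j) * W j k * (d i k * u i k) - (u i j * e i j) * W j k * (e i k * u i k)|
        ≤ S i * |W j k| * (L / 4) := by
    intro i j k
    have h1 : (u i j * d i j) * W j k * (d i k * u i k)
        - (u i j * e i j) * W j k * (e i k * u i k)
        = (u i j * u i k) * W j k * (d i j * d i k - e i j * e i k) := by ring
    rw [h1, abs_mul, abs_mul]
    have huu : |u i j * u i k| ≤ S i := by
      have h2 : (u i j) ^ 2 ≤ S i :=
        Finset.single_le_sum (f := fun l => (u i l) ^ 2) (fun l _ => sq_nonneg _)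
          (Finset.mem_univ j)
      have h3 : (u i k) ^ 2 ≤ S i :=
        Finset.single_le_sum (f := fun l => (u i l) ^ 2) (fun l _ => sq_nonneg _)
          (Finset.mem_univ k)
      have h4 : |u i j| ≤ Real.sqrt (S i) := Real.abs_le_sqrt h2
      have h5 : |u i k| ≤ Real.sqrt (S i) := Real.abs_le_sqrt h3
      calc |u i j * u i k| = |u i j| * |u i k| := abs_mul _ _
        _ ≤ Real.sqrt (S i) * Real.sqrt (S i) :=
            mul_le_mul h4 h5 (abs_nonneg _) (Real.sqrt_nonneg _)
        _ = S i := Real.mul_self_sqrt (hS0 i)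
    have hdd : |d i j * d i k - e i j * e i k| ≤ L / 4 := by
      have h6 : d i j * d i k - e i j * e i k
          = (d i j - e i j) * d i k + e i j * (d i k - e i k) := by ring
      rw [h6]
      calc |(d i j - e i j) * d i k + e i j * (d i k - e i k)|
          ≤ |(d i j - e i j) * d i k| + |e i j * (d i k - e i k)| := abs_add_le _ _
        _ = |d i j - e i j| * |d i k| + |e i j| * |d i k - e i k| := by
            rw [abs_mul, abs_mul]
        _ ≤ (L/4) * (1/2) + (1/2) * (L/4) := by
            have A1 : |d i j - e i j| * |d i k| ≤ (L/4) * (1/2) :=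
              mul_le_mul (hde i j)
                (by rw [abs_of_nonneg (hd0 i k)]; exact hdub i k) (abs_nonneg _)
                (by positivity)
            have A2 : |e i j| * |d i k - e i k| ≤ (1/2) * (L/4) :=
              mul_le_mul (by rw [abs_of_nonneg (he0 i j)]; exact heub i j) (hde i k)
                (abs_nonneg _) (by norm_num)
            linarith
        _ = L / 4 := by ring
    have t1 : |u i j * u i k| * |W j k| ≤ S i * |W j k| :=
      mul_le_mul_of_nonneg_right huu (abs_nonneg _)
    have t2 : |u i j * u i k| * |W j k| * |d i j * d i k - e i j * e i k|
        ≤ (S i * |W j k|) * |d i j * d i k - e i j * e i k| :=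
      mul_le_mul_of_nonneg_right t1 (abs_nonneg _)
    have t3 : (S i * |W j k|) * |d i j * d i k - e i j * e i k|
        ≤ (S i * |W j k|) * (L/4) :=
      mul_le_mul_of_nonneg_left hdd (mul_nonneg (hS0 i) (abs_nonneg _))
    exact le_trans t2 t3
  -- sum up
  have hsum : |b ⬝ᵥ ((∑ i, Hcluster (X i) W β) - (∑ i, Hcluster (X i) W β0)).mulVec b|
      ≤ ∑ i, S i * Kw * (L / 4) := by
    rw [hexp]
    refine le_trans (Finset.abs_sum_le_sum_abs _ _) (Finset.sum_le_sum fun i _ => ?_)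
    refine le_trans (Finset.abs_sum_le_sum_abs _ _) ?_
    have : ∀ j : Fin m, |∑ k, ((u i j * d i j) * W j k * (d i k * u i k)
        - (u i j * e i j) * W j k * (e i k * u i k))|
        ≤ ∑ k, S i * |W j k| * (L/4) :=
      fun j => le_trans (Finset.abs_sum_le_sum_abs _ _)
        (Finset.sum_le_sum fun k _ => hterm i j k)
    refine le_trans (Finset.sum_le_sum fun j _ => this j) ?_
    rw [GEEaux_sum_sum_const_mul, hKwdef]
  have hSsum : ∑ i, S i ≤ b4 * nn := by
    have : ∑ i, S i = b ⬝ᵥ (∑ i, (X i)ᵀ * X i).mulVec b := by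
      rw [GEEaux_quadform_sum]
      exact Finset.sum_congr rfl fun i _ => (GEEaux_dot_XtX _ _).symm
    rw [this]; exact hA3'
  have hfin : ∑ i, S i * Kw * (L / 4) ≤ Cx * Δ / 4 * Kw * b4 * (Real.sqrt nn * pn) := by
    have h7 : ∑ i, S i * Kw * (L / 4) = (Kw * (L/4)) * ∑ i, S i := by
      rw [Finset.mul_sum]; exact Finset.sum_congr rfl fun i _ => by ring
    rw [h7]
    have h8 : (Kw * (L/4)) * (∑ i, S i) ≤ (Kw * (L/4)) * (b4 * nn) :=
      mul_le_mul_of_nonneg_left hSsum (by positivity)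
    refine le_trans h8 (le_of_eq ?_)
    -- arithmetic: Kw*(L/4)*(b4*n) = CxΔ/4*Kw*b4*(√n*p)
    have e1 : Real.sqrt ((pn:ℝ)/(nn:ℝ)) = Real.sqrt pn / Real.sqrt nn :=
      Real.sqrt_div (by positivity) _
    have e2 : Real.sqrt (pn:ℝ) * Real.sqrt (pn:ℝ) = (pn:ℝ) :=
      Real.mul_self_sqrt (by positivity)
    have e3 : (0:ℝ) < Real.sqrt nn := Real.sqrt_pos.2 (by exact_mod_cast hn)
    have e4 : Real.sqrt (nn:ℝ) * Real.sqrt (nn:ℝ) = (nn:ℝ) :=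
      Real.mul_self_sqrt (by positivity)
    have e5 : Real.sqrt ((pn:ℝ)/nn) * nn = Real.sqrt pn * Real.sqrt nn := by
      rw [e1, div_mul_eq_mul_div, mul_div_assoc, Real.div_sqrt]
    have e0 : Cx * Real.sqrt (pn:ℝ) * (Δ * Real.sqrt ((pn:ℝ)/nn)) * nn
        = Cx * Δ * (Real.sqrt (pn:ℝ) * (Real.sqrt ((pn:ℝ)/nn) * nn)) := by ring
    have e6 : L * nn = Cx * Δ * (Real.sqrt nn * pn) := by
      rw [hLdef, e0, e5, ← mul_assoc (Real.sqrt (pn:ℝ)), e2]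
      ring
    linear_combination (Kw * b4 / 4) * e6
  exact le_trans hsum hfin

end Aux

/-- Lemma 5: equicontinuity of H̄_n near β₀. -/
theorem gee_Hbar_equicontinuity
    (m : ℕ) (hm : 0 < m) (p : ℕ → ℕ) (hp : ∀ n, 0 < p n)
    (Ω : ℕ → Type) [∀ n, MeasurableSpace (Ω n)]
    (P : ∀ n, Measure (Ω n)) [∀ n, IsProbabilityMeasure (P n)]
    (X : ∀ n, Fin n → Matrix (Fin m) (Fin (p n)) ℝ)
    (Y : ∀ n, Fin n → Ω n → Fin m → ℝ)
    (β0 : ∀ n, Fin (p n) → ℝ)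
    (hmeas : ∀ n i, Measurable (Y n i))
    (hbin : ∀ n i ω j, Y n i ω j = 0 ∨ Y n i ω j = 1)
    (hindep : ∀ n, iIndepFun (fun i => Y n i) (P n))
    (hmean : ∀ n (i : Fin n) j, ∫ ω, Y n i ω j ∂(P n) = piv (X n i) (β0 n) j)
    (R0 : Matrix (Fin m) (Fin m) ℝ) (hR0 : R0.PosDef)
    (hcorr : ∀ n (i : Fin n) j j',
      ∫ ω, eps (X n i) (β0 n) (Y n i ω) j * eps (X n i) (β0 n) (Y n i ω) j' ∂(P n) = R0 j j')
    (hA1 : ∃ C : ℝ, ∀ n (i : Fin n) j, vnorm (X n i j) ≤ C * Real.sqrt (p n))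
    (b1 b2 : ℝ) (hb1 : 0 < b1) (hb2 : b2 < 1)
    (hA2 : ∀ n (i : Fin n) j, b1 ≤ piv (X n i) (β0 n) j ∧ piv (X n i) (β0 n) j ≤ b2)
    (hA2c : ∀ n, ∃ B : Set (Fin (p n) → ℝ), IsCompact B ∧ β0 n ∈ interior B)
    (b3 b4 : ℝ) (hb3 : 0 < b3)
    (hA3 : ∀ n, 0 < n → ∀ v : Fin (p n) → ℝ,
      b3 * (∑ k, v k ^ 2) ≤ (n : ℝ)⁻¹ * (v ⬝ᵥ (∑ i, (X n i)ᵀ * X n i).mulVec v) ∧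
      (n : ℝ)⁻¹ * (v ⬝ᵥ (∑ i, (X n i)ᵀ * X n i).mulVec v) ≤ b4 * (∑ k, v k ^ 2))
    (Rbar : Matrix (Fin m) (Fin m) ℝ) (hRbar : Rbar.PosDef)
    (Rhat : ∀ n, Ω n → Matrix (Fin m) (Fin m) ℝ)
    (hA4 : IsBigOP P (fun n ω => fnorm ((Rhat n ω)⁻¹ - Rbar⁻¹))
      (fun n => Real.sqrt (p n / n)))
    (hrate : Tendsto (fun n => (p n : ℝ) ^ 2 / n) atTop (𝓝 0)) :
    ∀ Δ : ℝ, 0 < Δ →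
      IsBigOP P (fun n _ω => sSup {r : ℝ | ∃ β b : Fin (p n) → ℝ,
          vnorm (β - β0 n) ≤ Δ * Real.sqrt (p n / n) ∧ vnorm b = 1 ∧
          r = |b ⬝ᵥ
            ((∑ i, Hcluster (X n i) Rbar⁻¹ β) -
             (∑ i, Hcluster (X n i) Rbar⁻¹ (β0 n))).mulVec b|})
        (fun n => Real.sqrt n * p n) := by
  intro Δ hΔ ε hε
  classical
  obtain ⟨Cx, hCxall⟩ := hA1
  -- Cx is nonnegative
  have hp1 : (0:ℝ) < Real.sqrt (p 1) := Real.sqrt_pos.2 (by exact_mod_cast hp 1)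
  have hCx : 0 ≤ Cx := by
    have h0 := hCxall 1 ⟨0, one_pos⟩ ⟨0, hm⟩
    have h1 : (0:ℝ) ≤ vnorm (X 1 ⟨0, one_pos⟩ ⟨0, hm⟩) := Real.sqrt_nonneg _
    nlinarith
  -- b4 is positive
  have hb4 : 0 < b4 := by
    have h2 := hA3 1 one_pos (Pi.single (⟨0, hp 1⟩ : Fin (p 1)) 1)
    rw [GEEaux_vnorm_single] at h2
    linarith [h2.1, h2.2]
  set Kw := ∑ j, ∑ k, |(Rbar⁻¹ : Matrix (Fin m) (Fin m) ℝ) j k| with hKwdef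
  have hKw : 0 ≤ Kw :=
    Finset.sum_nonneg fun j _ => Finset.sum_nonneg fun k _ => abs_nonneg _
  set K := Cx * Δ / 4 * Kw * b4 with hKdef
  have hK : 0 ≤ K := by
    have : 0 ≤ Cx * Δ / 4 := by positivity
    positivity
  refine ⟨K + 1, by linarith, ?_⟩
  filter_upwards [Filter.eventually_ge_atTop 1] with n hn
  have hn0 : 0 < n := hn
  set Sset := {r : ℝ | ∃ β b : Fin (p n) → ℝ,
      vnorm (β - β0 n) ≤ Δ * Real.sqrt (p n / n) ∧ vnorm b = 1 ∧
      r = |b ⬝ᵥ ((∑ i, Hcluster (X n i) Rbar⁻¹ β) -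
          (∑ i, Hcluster (X n i) Rbar⁻¹ (β0 n))).mulVec b|} with hSset
  have hub : ∀ r ∈ Sset, r ≤ K * (Real.sqrt n * p n) := by
    rintro r ⟨β, b, h1, h2, rfl⟩
    have hsum1 : ∑ k, b k ^ 2 = 1 := by
      have := h2
      rw [vnorm] at this
      nlinarith [Real.sq_sqrt (Finset.sum_nonneg fun k (_ : k ∈ Finset.univ) =>
        sq_nonneg (b k)), Real.sqrt_nonneg (∑ k, b k ^ 2)]
    have hA3' : b ⬝ᵥ (∑ i, (X n i)ᵀ * X n i).mulVec b ≤ b4 * n := by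
      have h3 := (hA3 n hn0 b).2
      rw [hsum1] at h3
      have hnpos : (0:ℝ) < n := by exact_mod_cast hn0
      rw [inv_mul_le_iff₀ hnpos] at h3
      linarith [h3]
    exact GEEaux_key_bound hn0 (X n) Rbar⁻¹ β (β0 n) b Cx Δ b4 hCx hΔ.le
      (fun i j => hCxall n i j) h1 hA3'
  have hmem0 : (0:ℝ) ∈ Sset := by
    refine ⟨β0 n, Pi.single (⟨0, hp n⟩ : Fin (p n)) 1, ?_, ?_, ?_⟩
    · have : vnorm (β0 n - β0 n) = 0 := by
        simp [vnorm]
      rw [this]; positivity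
    · rw [vnorm, GEEaux_vnorm_single, Real.sqrt_one]
    · rw [sub_self, Matrix.zero_mulVec, dotProduct_zero, abs_zero]
  have hbdd : BddAbove Sset := ⟨K * (Real.sqrt n * p n), fun r hr => hub r hr⟩
  have hS1 : sSup Sset ≤ K * (Real.sqrt n * p n) := csSup_le ⟨0, hmem0⟩ hub
  have hS0 : (0:ℝ) ≤ sSup Sset := le_csSup hbdd hmem0
  have ha : (0:ℝ) ≤ Real.sqrt n * p n := by positivity
  have hempty : {ω : Ω n | (K + 1) * (Real.sqrt n * p n) < |sSup Sset|} = ∅ := by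
    apply Set.eq_empty_iff_forall_notMem.2
    intro ω hω
    simp only [Set.mem_setOf_eq] at hω
    rw [abs_of_nonneg hS0] at hω
    nlinarith
  rw [hempty]
  simp
end
end
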